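/- arXiv:1502.00829 — 5 statements merged into one kernel-verified Lean document; each statement's English description precedes it below -/
import Mathlib

section
/- If X is d-separated from Y conditional on Z in a DAG G, then in every probability distribution P that satisfies the local directed Markov condition for G, X is independent of Y conditional on Z. -/
/-- A directed acyclic graph on vertex set `V`. -/
structure DAG (V : Type*) where
  Edge : V → V → Prop
  acyclic : ∀ x, ¬ Relation.TransGen Edge x x

namespace DAG

variable {V : Type*} (G : DAG V)

/-- `x` and `y` are adjacent: there is an edge between them in either direction. -/
def Adj (x y : V) : Prop := G.Edge x y ∨ G.Edge y x

/-- `y` is a descendant of `x` (`x` is an ancestor of `y`); reflexive. -/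
def Desc (x y : V) : Prop := Relation.ReflTransGen G.Edge x y

/-- The parents of `v`. -/
def Parents (v : V) : Set V := {u | G.Edge u v}

/-- The vertices that are neither parents nor descendants of `v`. -/
def NonDescNonPar (v : V) : Set V := {u | ¬ G.Desc v u ∧ ¬ G.Edge u v}

/-- `b` is a collider on the path `p`: `p` contains a consecutive subsequence
`a, b, c` with both edges pointing into `b`. -/
def ColliderOn (p : List V) (b : V) : Prop :=
  ∃ a c, [a, b, c] <:+: p ∧ G.Edge a b ∧ G.Edge c b

/-- `b` is active on the path `p` between `x` and `y` conditional on `Z`: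
it is an endpoint, or a noncollider not in `Z`, or a collider that is in `Z`
or has a descendant in `Z`. -/
def ActiveOn (p : List V) (x y : V) (Z : Set V) (b : V) : Prop :=
  b = x ∨ b = y ∨
    (¬ G.ColliderOn p b ∧ b ∉ Z) ∨
    (G.ColliderOn p b ∧ ∃ d ∈ Z, G.Desc b d)

/-- `p` is an acyclic path between `x` and `y`, every vertex of which is
active conditional on `Z`. -/
def ActivePath (p : List V) (x y : V) (Z : Set V) : Prop :=
  p.Nodup ∧ 2 ≤ p.length ∧ p.Chain' G.Adj ∧
    p.head? = some x ∧ p.getLast? = some y ∧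
    ∀ b ∈ p, G.ActiveOn p x y Z b

/-- `x` is d-separated from `y` conditional on `Z`: there is no active acyclic
path between `x` and `y` conditional on `Z`. -/
def DSep (x y : V) (Z : Set V) : Prop := ¬ ∃ p : List V, G.ActivePath p x y Z

/-- `(x, y, z)` is an unshielded collider. -/
def UnshieldedCollider (x y z : V) : Prop :=
  G.Edge x y ∧ G.Edge z y ∧ ¬ G.Adj x z

/-- `(x, y, z)` is an unshielded noncollider. -/
def UnshieldedNoncollider (x y z : V) : Prop :=
  G.Adj x y ∧ G.Adj y z ∧ ¬ G.Adj x z ∧ ¬ (G.Edge x y ∧ G.Edge z y)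

end DAG

open MeasureTheory ProbabilityTheory

/-- The σ-algebra generated by the family of variables `f i` for `i ∈ S`. -/
def genFrom {Ω V : Type*} (f : V → Ω → ℝ) (S : Set V) : MeasurableSpace Ω :=
  ⨆ i ∈ S, MeasurableSpace.comap (f i) inferInstance

lemma genFrom_le {Ω V : Type*} [mΩ : MeasurableSpace Ω] (f : V → Ω → ℝ)
    (hf : ∀ i, Measurable (f i)) (S : Set V) : genFrom f S ≤ mΩ :=
  iSup₂_le fun i _ => (hf i).comap_le

/-- The set of variables indexed by `A` is conditionally independent of the set of
variables indexed by `B` given the set of variables indexed by `C`, under `μ`. -/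
def CI {Ω V : Type*} [mΩ : MeasurableSpace Ω] [StandardBorelSpace Ω]
    (μ : Measure Ω) [IsFiniteMeasure μ] (f : V → Ω → ℝ) (hf : ∀ i, Measurable (f i))
    (A B C : Set V) : Prop :=
  ProbabilityTheory.CondIndep (genFrom f C) (genFrom f A) (genFrom f B)
    (genFrom_le f hf C) μ

/-- `μ` satisfies the local directed Markov condition for `G` (with variables `f`):
each variable is independent of its non-parents-non-descendants given its parents. -/
def LocalMarkov {Ω V : Type*} [mΩ : MeasurableSpace Ω] [StandardBorelSpace Ω]
    (μ : Measure Ω) [IsFiniteMeasure μ] (f : V → Ω → ℝ) (hf : ∀ i, Measurable (f i))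
    (G : DAG V) : Prop :=
  ∀ v : V, CI μ f hf {v} (G.NonDescNonPar v) (G.Parents v)

section ProbLayer
set_option linter.unusedSectionVars false

open MeasureTheory ProbabilityTheory

variable {Ω : Type*} {mΩ : MeasurableSpace Ω} [StandardBorelSpace Ω]
  {μ : Measure Ω} [IsFiniteMeasure μ]

/-- real indicator of a set -/
noncomputable def ind (s : Set Ω) : Ω → ℝ := s.indicator (fun _ => 1)

lemma integrable_ind {s : Set Ω} (hs : MeasurableSet s) : Integrable (ind s) μ :=
  (integrable_const (1:ℝ)).indicator hs

lemma ind_mul (s t : Set Ω) : ind (s ∩ t) = fun x => ind t x * ind s x := by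
  funext x
  by_cases hx : x ∈ s <;> by_cases hx' : x ∈ t <;>
    simp [ind, Set.indicator, hx, hx', Set.mem_inter_iff]

lemma stronglyMeasurable_ind {m : MeasurableSpace Ω} {s : Set Ω} (hs : MeasurableSet[m] s) :
    StronglyMeasurable[m] (ind s) :=
  (stronglyMeasurable_const (β := ℝ)).indicator hs

lemma bdd_ind (s : Set Ω) (x : Ω) : ‖ind s x‖ ≤ 1 := by
  by_cases hx : x ∈ s <;> simp [ind, Set.indicator, hx]

lemma ae_bdd_condexp_ind {m : MeasurableSpace Ω} {s : Set Ω} :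
    ∀ᵐ x ∂μ, ‖(μ[ind s | m]) x‖ ≤ (1:ℝ) := by
  have h := ae_bdd_condExp_of_ae_bdd (μ := μ) (m := m) (R := 1) (f := ind s)
    (Filter.Eventually.of_forall (fun x => by simpa using bdd_ind s x))
  simpa using h

lemma sup_eq_generateFrom_inters (m₂ m' : MeasurableSpace Ω) :
    m₂ ⊔ m' = MeasurableSpace.generateFrom
      {t | ∃ t₂ t', MeasurableSet[m₂] t₂ ∧ MeasurableSet[m'] t' ∧ t = t₂ ∩ t'} := by
  apply le_antisymm
  · refine sup_le ?_ ?_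
    · intro t ht
      exact MeasurableSpace.measurableSet_generateFrom ⟨t, Set.univ, ht, MeasurableSet.univ,
        (Set.inter_univ t).symm⟩
    · intro t ht
      exact MeasurableSpace.measurableSet_generateFrom ⟨Set.univ, t, MeasurableSet.univ, ht,
        (Set.univ_inter t).symm⟩
  · refine MeasurableSpace.generateFrom_le ?_
    rintro t ⟨t₂, t', h₂, h', rfl⟩
    exact MeasurableSet.inter ((le_sup_left : m₂ ≤ m₂ ⊔ m') t₂ h₂)
      ((le_sup_right : m' ≤ m₂ ⊔ m') t' h')

lemma isPiSystem_inters (m₂ m' : MeasurableSpace Ω) :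
    IsPiSystem {t : Set Ω | ∃ t₂ t', MeasurableSet[m₂] t₂ ∧ MeasurableSet[m'] t' ∧ t = t₂ ∩ t'} := by
  rintro u ⟨u₂, u', hu₂, hu', rfl⟩ v ⟨v₂, v', hv₂, hv', rfl⟩ -
  exact ⟨u₂ ∩ v₂, u' ∩ v', hu₂.inter hv₂, hu'.inter hv', by ac_rfl⟩

lemma condexp_of_condIndep {m' m₁ m₂ : MeasurableSpace Ω} (hm' : m' ≤ mΩ) (hm₁ : m₁ ≤ mΩ)
    (hm₂ : m₂ ≤ mΩ) (h : CondIndep m' m₁ m₂ hm' μ) {s : Set Ω} (hs : MeasurableSet[m₁] s) :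
    μ[ind s | m₂ ⊔ m'] =ᵐ[μ] μ[ind s | m'] := by
  letI : MeasurableSpace Ω := mΩ
  have hsup : m₂ ⊔ m' ≤ mΩ := sup_le hm₂ hm'
  have hsm : MeasurableSet[mΩ] s := hm₁ s hs
  have hF : Integrable (ind s) μ := integrable_ind hsm
  rw [condIndep_iff m' m₁ m₂ hm' hm₁ hm₂ μ] at h
  have key : ∀ t : Set Ω, MeasurableSet[m₂ ⊔ m'] t →
      ∫ x in t, (μ[ind s | m']) x ∂μ = ∫ x in t, ind s x ∂μ := by
    have hind := @MeasurableSpace.induction_on_inter Ω (m₂ ⊔ m')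
      (fun t _ => ∫ x in t, (μ[ind s | m']) x ∂μ = ∫ x in t, ind s x ∂μ) _
      (sup_eq_generateFrom_inters m₂ m') (isPiSystem_inters m₂ m') (by simp) ?basic ?compl ?union
    · exact fun t ht => hind t ht
    case basic =>
      rintro u ⟨t₂, t', h₂, h', rfl⟩
      have ht₂ : MeasurableSet[mΩ] t₂ := hm₂ _ h₂
      have ht' : MeasurableSet[mΩ] t' := hm' _ h'
      have hgind : (fun x => (μ[ind s | m']) x * ind t₂ x) = t₂.indicator (μ[ind s | m']) := by
        funext x
        by_cases hx : x ∈ t₂ <;> simp [ind, Set.indicator, hx]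
      have hint : Integrable (fun x => (μ[ind s | m']) x * ind t₂ x) μ := by
        rw [hgind]; exact integrable_condExp.indicator ht₂
      have e3 : μ[(fun x => (μ[ind s | m']) x * ind t₂ x) | m']
          =ᵐ[μ] fun x => (μ[ind s | m']) x * (μ[ind t₂ | m']) x := by
        have := condExp_stronglyMeasurable_mul_of_bound hm'
          (stronglyMeasurable_condExp (f := ind s)) (integrable_ind ht₂) 1 (ae_bdd_condexp_ind (μ := μ))
        exact this
      have e4 : (fun x => (μ[ind s | m']) x * (μ[ind t₂ | m']) x) =ᵐ[μ] μ[ind (s ∩ t₂) | m'] := by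
        have hCI := h s t₂ hs h₂
        exact (hCI.trans (by rfl)).symm
      have e5 : ∫ x in t', (μ[(fun x => (μ[ind s | m']) x * ind t₂ x) | m']) x ∂μ
          = ∫ x in t', (μ[ind (s ∩ t₂) | m']) x ∂μ :=
        setIntegral_congr_ae ht' ((e3.trans e4).mono fun x hx _ => hx)
      have e6 : ∫ x in t', (μ[ind (s ∩ t₂) | m']) x ∂μ = ∫ x in t', ind (s ∩ t₂) x ∂μ :=
        setIntegral_condExp hm' (integrable_ind (hsm.inter ht₂)) h'
      have e7 : t₂.indicator (ind s) = ind (s ∩ t₂) := by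
        funext x
        by_cases hx : x ∈ t₂ <;> by_cases hx' : x ∈ s <;> simp [ind, Set.indicator, hx, hx']
      calc ∫ x in t₂ ∩ t', (μ[ind s | m']) x ∂μ
          = ∫ x in t' ∩ t₂, (μ[ind s | m']) x ∂μ := by rw [Set.inter_comm]
        _ = ∫ x in t', t₂.indicator (μ[ind s | m']) x ∂μ := (setIntegral_indicator ht₂).symm
        _ = ∫ x in t', (fun x => (μ[ind s | m']) x * ind t₂ x) x ∂μ := by rw [hgind]
        _ = ∫ x in t', (μ[(fun x => (μ[ind s | m']) x * ind t₂ x) | m']) x ∂μ :=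
            (setIntegral_condExp hm' hint h').symm
        _ = ∫ x in t', ind (s ∩ t₂) x ∂μ := by rw [e5, e6]
        _ = ∫ x in t', t₂.indicator (ind s) x ∂μ := by rw [e7]
        _ = ∫ x in t' ∩ t₂, ind s x ∂μ := setIntegral_indicator ht₂
        _ = ∫ x in t₂ ∩ t', ind s x ∂μ := by rw [Set.inter_comm]
    case compl =>
      intro t htm Ct
      have htΩ : MeasurableSet[mΩ] t := hsup _ htm
      have h1 := integral_add_compl htΩ (integrable_condExp (μ := μ) (f := ind s) (m := m'))
      have h2 := integral_add_compl htΩ hF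
      have h3 : ∫ x, (μ[ind s | m']) x ∂μ = ∫ x, ind s x ∂μ := integral_condExp hm'
      linarith
    case union =>
      intro fs hdisj hmeas hC
      have hmeasΩ : ∀ i, MeasurableSet[mΩ] (fs i) := fun i => hsup _ (hmeas i)
      rw [integral_iUnion hmeasΩ hdisj integrable_condExp.integrableOn,
        integral_iUnion hmeasΩ hdisj hF.integrableOn]
      exact tsum_congr hC
  refine (ae_eq_condExp_of_forall_setIntegral_eq hsup hF
    (fun t _ _ => integrable_condExp.integrableOn) (fun t htm _ => key t htm) ?_).symm
  exact ((stronglyMeasurable_condExp (m := m') (μ := μ) (f := ind s)).mono (le_sup_right : m' ≤ m₂ ⊔ m')).aestronglyMeasurable (μ := μ)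

lemma condIndep_of_condexp {m' m₁ m₂ : MeasurableSpace Ω} (hm' : m' ≤ mΩ) (hm₁ : m₁ ≤ mΩ)
    (hm₂ : m₂ ≤ mΩ)
    (h : ∀ s : Set Ω, MeasurableSet[m₁] s → μ[ind s | m₂ ⊔ m'] =ᵐ[μ] μ[ind s | m']) :
    CondIndep m' m₁ m₂ hm' μ := by
  letI : MeasurableSpace Ω := mΩ
  have hsup : m₂ ⊔ m' ≤ mΩ := sup_le hm₂ hm'
  rw [condIndep_iff m' m₁ m₂ hm' hm₁ hm₂ μ]
  intro t1 t2 h1 h2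
  have h1Ω : MeasurableSet[mΩ] t1 := hm₁ _ h1
  have h2Ω : MeasurableSet[mΩ] t2 := hm₂ _ h2
  show μ[ind (t1 ∩ t2) | m'] =ᵐ[μ] μ[ind t1 | m'] * μ[ind t2 | m']
  have e0 : ind (t1 ∩ t2) = fun x => ind t2 x * ind t1 x := ind_mul t1 t2
  have inner : μ[ind (t1 ∩ t2) | m₂ ⊔ m'] =ᵐ[μ] fun x => ind t2 x * (μ[ind t1 | m']) x := by
    have e1 : μ[ind (t1 ∩ t2) | m₂ ⊔ m'] =ᵐ[μ] fun x => ind t2 x * (μ[ind t1 | m₂ ⊔ m']) x := by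
      rw [e0]
      exact condExp_stronglyMeasurable_mul_of_bound hsup
        (stronglyMeasurable_ind ((le_sup_left : m₂ ≤ m₂ ⊔ m') _ h2)) (integrable_ind h1Ω) 1
        (Filter.Eventually.of_forall (bdd_ind t2))
    exact e1.trans ((h t1 h1).mono fun x hx => by simp only [hx])
  have outer : μ[(fun x => ind t2 x * (μ[ind t1 | m']) x) | m']
      =ᵐ[μ] μ[ind t1 | m'] * μ[ind t2 | m'] := by
    have ecomm : (fun x => ind t2 x * (μ[ind t1 | m']) x)
        = fun x => (μ[ind t1 | m']) x * ind t2 x := by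
      funext x; exact mul_comm _ _
    rw [ecomm]
    exact condExp_stronglyMeasurable_mul_of_bound hm'
      (stronglyMeasurable_condExp (f := ind t1)) (integrable_ind h2Ω) 1 (ae_bdd_condexp_ind (μ := μ))
  calc μ[ind (t1 ∩ t2) | m']
      =ᵐ[μ] μ[(μ[ind (t1 ∩ t2) | m₂ ⊔ m']) | m'] := (condExp_condExp_of_le le_sup_right hsup).symm
    _ =ᵐ[μ] μ[(fun x => ind t2 x * (μ[ind t1 | m']) x) | m'] := condExp_congr_ae inner
    _ =ᵐ[μ] μ[ind t1 | m'] * μ[ind t2 | m'] := outer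

end ProbLayer
section CILayer

open MeasureTheory ProbabilityTheory
set_option linter.unusedSectionVars false

variable {Ω V : Type*} [mΩ : MeasurableSpace Ω] [StandardBorelSpace Ω]
  {μ : Measure Ω} [IsFiniteMeasure μ] {f : V → Ω → ℝ} {hf : ∀ i, Measurable (f i)}

lemma genFrom_mono (f : V → Ω → ℝ) {A B : Set V} (h : A ⊆ B) : genFrom f A ≤ genFrom f B :=
  iSup₂_le fun i hi => le_iSup₂ (f := fun i (_ : i ∈ B) => MeasurableSpace.comap (f i) inferInstance) i (h hi)

lemma genFrom_union (f : V → Ω → ℝ) (A B : Set V) :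
    genFrom f (A ∪ B) = genFrom f A ⊔ genFrom f B := by
  simp only [genFrom]
  exact iSup_union

lemma genFrom_empty (f : V → Ω → ℝ) : genFrom f (∅ : Set V) = ⊥ := by simp [genFrom]

/-- conditional-expectation characterization of `CI` -/
def CIc (μ : Measure Ω) [IsFiniteMeasure μ] (f : V → Ω → ℝ) (A B C : Set V) : Prop :=
  ∀ s : Set Ω, MeasurableSet[genFrom f A] s →
    μ[ind s | genFrom f B ⊔ genFrom f C] =ᵐ[μ] μ[ind s | genFrom f C]

lemma CI_iff_CIc (A B C : Set V) : CI μ f hf A B C ↔ CIc μ f A B C :=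
  ⟨fun h s hs => condexp_of_condIndep (genFrom_le f hf C) (genFrom_le f hf A)
      (genFrom_le f hf B) h hs,
   fun h => condIndep_of_condexp (genFrom_le f hf C) (genFrom_le f hf A)
      (genFrom_le f hf B) h⟩

lemma CI.symm' {A B C : Set V} (h : CI μ f hf A B C) : CI μ f hf B A C := CondIndep.symm h

lemma CI.mono_right {A B C B' : Set V} (h : CI μ f hf A B C) (hB : B' ⊆ B) :
    CI μ f hf A B' C :=
  condIndep_of_condIndep_of_le_right h (genFrom_mono f hB)

lemma CI.weakUnion {A B C D : Set V} (h : CI μ f hf A (B ∪ D) C) : CI μ f hf A B (C ∪ D) := by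
  rw [CI_iff_CIc (hf := hf)] at h ⊢
  intro s hs
  have h1 := h s hs
  have e : genFrom f B ⊔ genFrom f (C ∪ D) = genFrom f (B ∪ D) ⊔ genFrom f C := by
    rw [← genFrom_union, ← genFrom_union]
    exact congrArg _ (by ext x; simp; tauto)
  have hle : genFrom f (C ∪ D) ≤ genFrom f (B ∪ D) ⊔ genFrom f C := by
    rw [← genFrom_union]
    exact genFrom_mono f (by intro x hx; rcases hx with hx | hx; · exact Or.inr hx
                             · exact Or.inl (Or.inr hx))
  have tower : μ[ind s | genFrom f (C ∪ D)] =ᵐ[μ] μ[ind s | genFrom f C] := by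
    calc μ[ind s | genFrom f (C ∪ D)]
        =ᵐ[μ] μ[(μ[ind s | genFrom f (B ∪ D) ⊔ genFrom f C]) | genFrom f (C ∪ D)] :=
          (condExp_condExp_of_le hle (sup_le (genFrom_le f hf _) (genFrom_le f hf _))).symm
      _ =ᵐ[μ] μ[(μ[ind s | genFrom f C]) | genFrom f (C ∪ D)] := condExp_congr_ae h1
      _ = μ[ind s | genFrom f C] := condExp_of_stronglyMeasurable (genFrom_le f hf (C ∪ D))
            (stronglyMeasurable_condExp.mono (genFrom_mono f Set.subset_union_left))
            integrable_condExp
  rw [e]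
  exact h1.trans tower.symm

lemma CI.contraction {A B C D : Set V} (h1 : CI μ f hf A B C) (h2 : CI μ f hf A D (B ∪ C)) :
    CI μ f hf A (B ∪ D) C := by
  rw [CI_iff_CIc (hf := hf)] at h1 h2 ⊢
  intro s hs
  have e1 := h1 s hs
  have e2 := h2 s hs
  have e : genFrom f (B ∪ D) ⊔ genFrom f C = genFrom f D ⊔ genFrom f (B ∪ C) := by
    rw [← genFrom_union, ← genFrom_union]
    exact congrArg _ (by ext x; simp; tauto)
  have e' : genFrom f (B ∪ C) = genFrom f B ⊔ genFrom f C := genFrom_union f B C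
  rw [e]
  refine e2.trans ?_
  rw [e']
  exact e1

lemma CI_empty_left (B C : Set V) : CI μ f hf (∅ : Set V) B C := by
  unfold CI
  rw [genFrom_empty]
  exact condIndep_bot_left _

/-- congruence in the sets -/
lemma CI.congr {A B C A' B' C' : Set V} (h : CI μ f hf A B C) (hA : A = A') (hB : B = B')
    (hC : C = C') : CI μ f hf A' B' C' := by subst hA; subst hB; subst hC; exact h

end CILayer
section GraphLayer

variable {V : Type*} [Fintype V] [DecidableEq V]

namespace DAG
set_option linter.unusedSectionVars false
set_option linter.unusedVariables false

variable (G : DAG V)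

/-- edge within the vertex subset `W` -/
def EW (W : Finset V) (x y : V) : Prop := G.Edge x y ∧ x ∈ W ∧ y ∈ W

def AdjW (W : Finset V) (x y : V) : Prop := G.EW W x y ∨ G.EW W y x

def DescW (W : Finset V) : V → V → Prop := Relation.ReflTransGen (G.EW W)

/-- activeness condition for an interior vertex `b` of a walk with neighbours `a`, `c` -/
def TripOK (W : Finset V) (S : Set V) (a b c : V) : Prop :=
  (G.Edge a b ∧ G.Edge c b → ∃ d ∈ S, G.DescW W b d) ∧
  (¬(G.Edge a b ∧ G.Edge c b) → b ∉ S)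

def Acts (W : Finset V) (S : Set V) (p : List V) : Prop :=
  ∀ a b c : V, [a, b, c] <:+: p → G.TripOK W S a b c

def Walk (W : Finset V) (S : Set V) (p : List V) : Prop :=
  p ≠ [] ∧ p.Chain' (G.AdjW W) ∧ (∀ x ∈ p, x ∈ W) ∧ G.Acts W S p

def Conn (W : Finset V) (S : Set V) (x y : V) : Prop :=
  ∃ p, G.Walk W S p ∧ p.head? = some x ∧ p.getLast? = some y

def dsepW (W : Finset V) (A B S : Set V) : Prop :=
  ∀ x ∈ A, ∀ y ∈ B, ¬ G.Conn W S x y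

def SinkW (W : Finset V) (w : V) : Prop := w ∈ W ∧ ∀ u ∈ W, ¬ G.Edge w u

variable {G}

lemma EW.mono {W W' : Finset V} (h : W ⊆ W') {x y : V} (hxy : G.EW W x y) : G.EW W' x y :=
  ⟨hxy.1, h hxy.2.1, h hxy.2.2⟩

lemma AdjW.mono {W W' : Finset V} (h : W ⊆ W') {x y : V} (hxy : G.AdjW W x y) :
    G.AdjW W' x y := hxy.imp (EW.mono h) (EW.mono h)

lemma DescW.mono {W W' : Finset V} (h : W ⊆ W') {x y : V} (hxy : G.DescW W x y) :
    G.DescW W' x y := Relation.ReflTransGen.mono (r := G.EW W) (p := G.EW W') (fun _ _ hab => EW.mono h hab) x y hxy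

lemma TripOK.mono {W W' : Finset V} (h : W ⊆ W') {S : Set V} {a b c : V}
    (ht : G.TripOK W S a b c) : G.TripOK W' S a b c :=
  ⟨fun hc => (ht.1 hc).imp (fun d hd => ⟨hd.1, hd.2.mono h⟩), ht.2⟩

lemma Acts.mono {W W' : Finset V} (h : W ⊆ W') {S : Set V} {p : List V}
    (hp : G.Acts W S p) : G.Acts W' S p := fun a b c habc => (hp a b c habc).mono h

lemma Walk.mono {W W' : Finset V} (h : W ⊆ W') {S : Set V} {p : List V}
    (hp : G.Walk W S p) : G.Walk W' S p :=
  ⟨hp.1, hp.2.1.imp (fun _ _ => AdjW.mono h), fun x hx => h (hp.2.2.1 x hx), hp.2.2.2.mono h⟩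

lemma Conn.mono {W W' : Finset V} (h : W ⊆ W') {S : Set V} {x y : V}
    (hxy : G.Conn W S x y) : G.Conn W' S x y := by
  obtain ⟨p, hp, h1, h2⟩ := hxy
  exact ⟨p, hp.mono h, h1, h2⟩

lemma TripOK.symm {W : Finset V} {S : Set V} {a b c : V} (ht : G.TripOK W S a b c) :
    G.TripOK W S c b a := by
  constructor
  · intro hc; exact ht.1 ⟨hc.2, hc.1⟩
  · intro hc; exact ht.2 (fun hc' => hc ⟨hc'.2, hc'.1⟩)

lemma Acts.reverse {W : Finset V} {S : Set V} {p : List V} (hp : G.Acts W S p) :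
    G.Acts W S p.reverse := by
  intro a b c habc
  have : [c, b, a] <:+: p := by
    have := List.reverse_infix.mpr habc
    simpa using this
  exact (hp c b a this).symm

lemma Walk.reverse {W : Finset V} {S : Set V} {p : List V} (hp : G.Walk W S p) :
    G.Walk W S p.reverse := by
  refine ⟨by simpa using hp.1, ?_, fun x hx => hp.2.2.1 x (by simpa using hx), hp.2.2.2.reverse⟩
  rw [List.Chain', List.isChain_reverse]
  exact hp.2.1.imp (fun a b hab => Or.symm hab)

lemma Conn.symm {W : Finset V} {S : Set V} {x y : V} (h : G.Conn W S x y) :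
    G.Conn W S y x := by
  obtain ⟨p, hp, h1, h2⟩ := h
  exact ⟨p.reverse, hp.reverse, by simpa using h2, by simpa using h1⟩

lemma Conn.single {W : Finset V} {S : Set V} {x : V} (hx : x ∈ W) : G.Conn W S x x := by
  refine ⟨[x], ⟨by simp, List.isChain_singleton _, by simpa using hx, ?_⟩, by simp, by simp⟩
  intro a b c habc
  have := habc.length_le
  simp at this

lemma chain'_of_infix_pair {R : V → V → Prop} {p : List V} {a b : V}
    (h : List.Chain' R p) (hab : [a, b] <:+: p) : R a b := by
  have := h.infix hab
  simpa using this

lemma descW_sink_eq {W : Finset V} {w d : V} (hsink : G.SinkW W w) (h : G.DescW W w d) :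
    d = w := by
  rcases h.cases_head with heq | ⟨u, hu, _⟩
  · exact heq.symm
  · exact absurd hu.1 (hsink.2 u hu.2.2)

/-- interior occurrences of a sink on a walk must be in `S` -/
lemma sink_interior_mem {W : Finset V} {S : Set V} {p : List V} {w : V}
    (hsink : G.SinkW W w) (hp : G.Walk W S p) (hw : w ∈ p)
    (hhead : p.head? ≠ some w) (hlast : p.getLast? ≠ some w) : w ∈ S := by
  obtain ⟨l1, l2, rfl⟩ := List.append_of_mem hw
  rcases l1.eq_nil_or_concat with rfl | ⟨l1', a, rfl⟩
  · simp at hhead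
  rcases l2 with _ | ⟨c, l2'⟩
  · rw [List.getLast?_concat] at hlast
    · simp at hlast
  have hinf : [a, w, c] <:+: l1'.concat a ++ w :: c :: l2' := by
    refine ⟨l1', l2', by simp⟩
  have haw : G.AdjW W a w :=
    chain'_of_infix_pair hp.2.1 ((show [a, w] <:+: [a, w, c] from ⟨[], [c], rfl⟩).trans hinf)
  have hwc : G.AdjW W w c :=
    chain'_of_infix_pair hp.2.1 ((show [w, c] <:+: [a, w, c] from ⟨[a], [], rfl⟩).trans hinf)
  have hEaw : G.Edge a w := by
    rcases haw with h | h
    · exact h.1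
    · exact absurd h.1 (hsink.2 a h.2.2)
  have hEcw : G.Edge c w := by
    rcases hwc with h | h
    · exact absurd h.1 (hsink.2 c h.2.2)
    · exact h.1
  obtain ⟨d, hdS, hdesc⟩ := (hp.2.2.2 a w c hinf).1 ⟨hEaw, hEcw⟩
  rwa [descW_sink_eq hsink hdesc] at hdS

lemma sink_not_mem_walk {W : Finset V} {S : Set V} {p : List V} {w : V}
    (hsink : G.SinkW W w) (hp : G.Walk W S p) (hwS : w ∉ S)
    (hhead : p.head? ≠ some w) (hlast : p.getLast? ≠ some w) : w ∉ p :=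
  fun hw => hwS (sink_interior_mem hsink hp hw hhead hlast)

lemma Acts.S_up {W : Finset V} {S : Set V} {w : V} {p : List V}
    (hp : G.Acts W (S \ {w}) p) (hw : w ∉ p) : G.Acts W S p := by
  intro a b c habc
  have hb : b ∈ p := habc.mem (by simp)
  have ht := hp a b c habc
  constructor
  · intro hcol
    obtain ⟨d, hd, hdesc⟩ := ht.1 hcol
    exact ⟨d, hd.1, hdesc⟩
  · intro hnc hbS
    exact ht.2 hnc ⟨hbS, by rintro rfl; exact hw hb⟩

/-- every nonempty `W` contains a sink -/
lemma exists_sinkW (G : DAG V) (W : Finset V) (hW : W.Nonempty) : ∃ w, G.SinkW W w := by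
  by_contra hno
  have hstep : ∀ w ∈ W, ∃ u ∈ W, G.Edge w u := by
    intro w hw
    by_contra hc
    push_neg at hc
    exact hno ⟨w, hw, fun u hu => hc u hu⟩
  choose ch hmem hedge using hstep
  let g : ℕ → {x // x ∈ W} := fun n =>
    Nat.rec ⟨hW.choose, hW.choose_spec⟩ (fun _ p => ⟨ch p.1 p.2, hmem p.1 p.2⟩) n
  have hg : ∀ n, G.Edge (g n).1 (g (n+1)).1 := fun n => hedge _ _
  have htrans : ∀ i j, i < j → Relation.TransGen G.Edge (g i).1 (g j).1 := by
    intro i j hij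
    induction j with
    | zero => omega
    | succ j ih =>
      rcases Nat.lt_succ_iff_lt_or_eq.mp hij with h | h
      · exact (ih h).tail (hg j)
      · subst h; exact Relation.TransGen.single (hg i)
  obtain ⟨i, j, hij, hgij⟩ := Finite.exists_ne_map_eq_of_infinite g
  rcases hij.lt_or_gt with h | h
  · have := htrans i j h
    rw [hgij] at this
    exact G.acyclic _ this
  · have := htrans j i h
    rw [← hgij] at this
    exact G.acyclic _ this

end DAG

end GraphLayer
section GraphLayer2

namespace DAG
set_option linter.unusedSectionVars false
set_option linter.unusedVariables false

variable {V : Type*} [Fintype V] [DecidableEq V] {G : DAG V}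

lemma infix_append_cases {α : Type*} {a b c : α} {p q : List α} (h : [a, b, c] <:+: p ++ q) :
    [a, b, c] <:+: p ∨ [a, b, c] <:+: q ∨
    (∃ l1 l2, p = l1 ++ [a, b] ∧ q = c :: l2) ∨
    (∃ l1 l2, p = l1 ++ [a] ∧ q = b :: c :: l2) := by
  induction p with
  | nil => simp at h; tauto
  | cons x p ih =>
    rw [List.cons_append, List.infix_cons_iff] at h
    rcases h with hpre | hinf
    · obtain ⟨t, ht⟩ := hpre
      simp only [List.cons_append, List.cons.injEq] at ht
      obtain ⟨rfl, ht⟩ := ht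
      match p, ht with
      | [], ht =>
        right; right; right
        exact ⟨[], t, by simp, by simpa using ht.symm⟩
      | [y], ht =>
        simp only [List.cons_append, List.nil_append, List.cons.injEq] at ht
        obtain ⟨rfl, ht⟩ := ht
        right; right; left
        exact ⟨[], t, by simp, by simpa using ht.symm⟩
      | y :: z :: p', ht =>
        simp only [List.cons_append, List.cons.injEq] at ht
        obtain ⟨rfl, rfl, _⟩ := ht
        left
        exact ⟨[], p', by simp⟩
    · rcases ih hinf with h | h | ⟨l1, l2, rfl, hq⟩ | ⟨l1, l2, rfl, hq⟩
      · left
        obtain ⟨s, t, hst⟩ := h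
        exact ⟨x :: s, t, by simp [hst]⟩
      · right; left; exact h
      · right; right; left; exact ⟨x :: l1, l2, by simp, hq⟩
      · right; right; right; exact ⟨x :: l1, l2, by simp, hq⟩

lemma exists_dup_decomp {α : Type*} {p : List α} (h : ¬ p.Nodup) :
    ∃ (v : α) (l1 l2 : List α), p = l1 ++ v :: l2 ∧ v ∈ l2 := by
  induction p with
  | nil => simp at h
  | cons x p ih =>
    rw [List.nodup_cons] at h
    by_cases hx : x ∈ p
    · exact ⟨x, [], p, by simp, hx⟩
    · have : ¬ p.Nodup := by tauto
      obtain ⟨v, l1, l2, rfl, hv⟩ := ih this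
      exact ⟨v, x :: l1, l2, by simp, hv⟩

lemma exists_last_occ {α : Type*} {v : α} : ∀ {l : List α}, v ∈ l →
    ∃ s t, l = s ++ v :: t ∧ v ∉ t := by
  intro l
  induction l with
  | nil => simp
  | cons x l ih =>
    intro hv
    by_cases hx : v ∈ l
    · obtain ⟨s, t, rfl, hvt⟩ := ih hx
      exact ⟨x :: s, t, by simp, hvt⟩
    · have : v = x := by rcases List.mem_cons.mp hv with h | h; exact h; exact absurd h hx
      subst this
      exact ⟨[], l, rfl, hx⟩

lemma nodup_middle_unique {α : Type*} {b : α} : ∀ {s s' t t' : List α},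
    s ++ b :: t = s' ++ b :: t' → (s ++ b :: t).Nodup → s = s' ∧ t = t' := by
  intro s
  induction s with
  | nil =>
    intro s' t t' heq hnd
    cases s' with
    | nil => simpa using heq
    | cons x s'' =>
      simp only [List.nil_append, List.cons_append, List.cons.injEq] at heq
      obtain ⟨rfl, heq⟩ := heq
      exfalso
      have hb : b ∈ t := heq ▸ List.mem_append.mpr (Or.inr List.mem_cons_self)
      simp only [List.nil_append, List.nodup_cons] at hnd
      exact hnd.1 hb
  | cons x s ih =>
    intro s' t t' heq hnd
    cases s' with
    | nil =>
      simp only [List.nil_append, List.cons_append, List.cons.injEq] at heq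
      obtain ⟨rfl, heq⟩ := heq
      exfalso
      simp only [List.cons_append, List.nodup_cons] at hnd
      exact hnd.1 (by simp)
    | cons y s'' =>
      simp only [List.cons_append, List.cons.injEq] at heq
      obtain ⟨rfl, heq⟩ := heq
      simp only [List.cons_append, List.nodup_cons] at hnd
      obtain ⟨h1, h2⟩ := ih heq hnd.2
      exact ⟨by rw [h1], h2⟩

/-- directed chase along a walk: either we find a collider giving a descendant in `Z`,
or the whole walk is a directed path. -/
lemma chase {W : Finset V} {Z : Set V} : ∀ (l : List V) (x e : V), l.head? = some e →
    G.EW W x e → (x :: l).Chain' (G.AdjW W) → G.Acts W Z (x :: l) →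
    (∃ d ∈ Z, G.DescW W x d) ∨ Relation.TransGen (G.EW W) x (l.getLast?.getD x) := by
  intro l
  induction l with
  | nil => simp
  | cons e' l' ih =>
    intro x e he hxe hchain hacts
    simp only [List.head?_cons, Option.some.injEq] at he
    subst he
    match l' with
    | [] =>
      right
      simpa using Relation.TransGen.single hxe
    | e2 :: l'' =>
      have hadj : G.AdjW W e' e2 := chain'_of_infix_pair hchain ⟨[x], l'', by simp⟩
      rcases hadj with hE | hE
      · have hch' : (e' :: e2 :: l'').Chain' (G.AdjW W) := hchain.suffix ⟨[x], rfl⟩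
        have hacts' : G.Acts W Z (e' :: e2 :: l'') :=
          fun a b c habc => hacts a b c (habc.trans ⟨[x], [], by simp⟩)
        rcases ih e' e2 rfl hE hch' hacts' with ⟨d, hd, hdesc⟩ | htg
        · exact Or.inl ⟨d, hd, Relation.ReflTransGen.head hxe hdesc⟩
        · right
          rw [List.getLast?_cons_cons]
          rw [List.getLast?_eq_getLast (l := e2 :: l'') (by simp)] at htg ⊢
          exact Relation.TransGen.head hxe htg
      · have htrip := hacts x e' e2 ⟨[], l'', by simp⟩
        obtain ⟨d, hd, hdesc⟩ := htrip.1 ⟨hxe.1, hE.1⟩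
        exact Or.inl ⟨d, hd, Relation.ReflTransGen.head hxe hdesc⟩

end DAG

end GraphLayer2
section GraphLayer3

namespace DAG
set_option linter.unusedSectionVars false
set_option linter.unusedVariables false

variable {V : Type*} [Fintype V] [DecidableEq V] {G : DAG V}

lemma descW_to_desc {W : Finset V} {b d : V} (h : G.DescW W b d) : G.Desc b d :=
  Relation.ReflTransGen.mono (r := G.EW W) (p := G.Edge) (fun _ _ h' => h'.1) b d h

lemma transGen_EW_to_edge {W : Finset V} {b d : V} (h : Relation.TransGen (G.EW W) b d) :
    Relation.TransGen G.Edge b d := Relation.TransGen.mono (r := G.EW W) (p := G.Edge) (fun _ _ h' => h'.1) b d h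

lemma adjW_to_adj {W : Finset V} {a b : V} (h : G.AdjW W a b) : G.Adj a b :=
  h.imp (fun h' => h'.1) (fun h' => h'.1)

lemma no_self_edge (G : DAG V) (v : V) : ¬ G.Edge v v :=
  fun h => G.acyclic v (Relation.TransGen.single h)

lemma chain'_join_mid {α : Type*} {R : α → α → Prop} {l t : List α} {v : α}
    (h1 : List.Chain' R (l ++ [v])) (h2 : List.Chain' R (v :: t)) :
    List.Chain' R (l ++ v :: t) := by
  rw [List.Chain', List.isChain_append] at h1 ⊢
  refine ⟨h1.1, h2, fun x hx y hy => ?_⟩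
  simp only [List.head?_cons, Option.mem_def, Option.some.injEq] at hy
  subst hy
  exact h1.2.2 x hx v (by simp)

lemma head?_append_cons {α : Type*} (l : List α) (a : α) (t t' : List α) :
    (l ++ a :: t).head? = (l ++ a :: t').head? := by cases l <;> simp

lemma acts_infix {W : Finset V} {S : Set V} {p q : List V} (h : G.Acts W S p)
    (hq : q <:+: p) : G.Acts W S q := fun a b c habc => h a b c (habc.trans hq)

lemma exists_activePath_of_walk {Z : Set V} :
    ∀ (n : ℕ) (p : List V) (x y : V), p.length ≤ n →
      G.Walk Finset.univ Z p → p.head? = some x → p.getLast? = some y → x ≠ y →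
      ∃ q, G.ActivePath q x y Z := by
  intro n
  induction n with
  | zero =>
    intro p x y hlen hw
    have : p = [] := List.length_eq_zero_iff.mp (Nat.le_zero.mp hlen)
    exact absurd this hw.1
  | succ n ih =>
    intro p x y hlen hw hx hy hxy
    by_cases hnd : p.Nodup
    · -- `p` is already a path
      refine ⟨p, hnd, ?_, ?_, hx, hy, ?_⟩
      · -- length ≥ 2
        match p, hx, hy with
        | [], hx, hy => simp at hx
        | [a], hx, hy =>
          simp only [List.head?_cons, Option.some.injEq] at hx
          simp only [List.getLast?_singleton, Option.some.injEq] at hy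
          exact absurd (hx.symm.trans hy) hxy
        | a :: b :: l, _, _ => simp
      · exact hw.2.1.imp (fun a b hab => adjW_to_adj hab)
      · -- every vertex is active
        intro b hb
        by_cases hbx : b = x
        · exact Or.inl hbx
        by_cases hby : b = y
        · exact Or.inr (Or.inl hby)
        obtain ⟨l1, l2, rfl⟩ := List.append_of_mem hb
        have hl1 : l1 ≠ [] := by
          rintro rfl
          simp only [List.nil_append, List.head?_cons, Option.some.injEq] at hx
          exact hbx hx
        have hl2 : l2 ≠ [] := by
          rintro rfl
          rw [List.getLast?_concat] at hy
          exact hby (by simpa using hy)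
        obtain ⟨l1', a, rfl⟩ := l1.eq_nil_or_concat.resolve_left hl1
        obtain ⟨c, l2', rfl⟩ := List.exists_cons_of_ne_nil hl2
        have hinf : [a, b, c] <:+: l1'.concat a ++ b :: c :: l2' := ⟨l1', l2', by simp⟩
        have htrip := hw.2.2.2 a b c hinf
        by_cases hcol : G.ColliderOn (l1'.concat a ++ b :: c :: l2') b
        · refine Or.inr (Or.inr (Or.inr ⟨hcol, ?_⟩))
          obtain ⟨a', c', hinf', hE1, hE2⟩ := hcol
          obtain ⟨s, t, heq⟩ := hinf'
          have heq' : (s ++ [a']) ++ b :: (c' :: t) = (l1'.concat a) ++ b :: (c :: l2') := by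
            simpa using heq
          obtain ⟨h1, h2⟩ := nodup_middle_unique heq' (by rw [heq']; exact hnd)
          have ha : a' = a := by
            have h1' := congrArg List.getLast? h1
            rw [List.getLast?_concat] at h1'
            rw [show l1'.concat a = l1' ++ [a] by simp, List.getLast?_concat] at h1'
            simpa using h1'
          have hc : c' = c := by simpa using congrArg List.head? h2
          subst ha; subst hc
          obtain ⟨d, hd, hdesc⟩ := htrip.1 ⟨hE1, hE2⟩
          exact ⟨d, hd, descW_to_desc hdesc⟩
        · exact Or.inr (Or.inr (Or.inl ⟨hcol,
            htrip.2 (fun hcc => hcol ⟨a, c, hinf, hcc.1, hcc.2⟩)⟩))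
    · -- surgery: remove a repeated vertex
      obtain ⟨v, l1, l2, rfl, hv⟩ := exists_dup_decomp hnd
      obtain ⟨t1, t2, rfl, hvt2⟩ := exists_last_occ hv
      have hChain := hw.2.1
      have hActs := hw.2.2.2
      have hpre : (l1 ++ [v]) <+: l1 ++ v :: (t1 ++ v :: t2) := ⟨t1 ++ v :: t2, by simp⟩
      have hsuf : (v :: t2) <:+ l1 ++ v :: (t1 ++ v :: t2) := ⟨l1 ++ v :: t1, by simp⟩
      have hchain' : (l1 ++ v :: t2).Chain' (G.AdjW Finset.univ) :=
        chain'_join_mid (hChain.prefix hpre) (hChain.suffix hsuf)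
      have hacts' : G.Acts Finset.univ Z (l1 ++ v :: t2) := by
        intro a b c habc
        rcases infix_append_cases habc with h | h | ⟨s3, t3, he1, he2⟩ | ⟨s4, t4, he1, he2⟩
        · exact hActs a b c (h.trans ⟨[], v :: (t1 ++ v :: t2), by simp⟩)
        · exact hActs a b c (h.trans hsuf.isInfix)
        · -- triple (a, b, v) at the end of l1 ++ [v]
          subst he1
          simp only [List.cons.injEq] at he2
          obtain ⟨rfl, rfl⟩ := he2
          exact hActs a b v ⟨s3, t1 ++ v :: t2, by simp⟩
        · -- the new triple (a, v, c)
          subst he1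
          simp only [List.cons.injEq] at he2
          obtain ⟨rfl, rfl⟩ := he2
          -- original list : s4 ++ [a] ++ v :: (t1 ++ v :: c :: t4)
          rcases t1 with _ | ⟨e, t1'⟩
          · exfalso
            have hvv : G.AdjW Finset.univ v v :=
              chain'_of_infix_pair hChain ⟨s4 ++ [a], c :: t4, by simp⟩
            exact (adjW_to_adj hvv).elim (no_self_edge G v) (no_self_edge G v)
          have T1 := hActs a v e ⟨s4, t1' ++ v :: c :: t4, by simp⟩
          obtain ⟨init, u2, hsplit2⟩ : ∃ init u2, v :: e :: t1' = init ++ [u2] := by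
            rcases (v :: e :: t1').eq_nil_or_concat' with h | ⟨i, u, h⟩
            · simp at h
            · exact ⟨i, u, h⟩
          have hT2inf : [u2, v, c] <:+: s4 ++ [a] ++ v :: (e :: t1' ++ v :: c :: t4) := by
            refine ⟨s4 ++ [a] ++ init, t4, ?_⟩
            have h1 : (s4 ++ [a] ++ init) ++ [u2, v, c] ++ t4
                = s4 ++ [a] ++ (init ++ [u2]) ++ (v :: c :: t4) := by simp
            rw [h1, ← hsplit2]
            simp
          have T2 := hActs u2 v c hT2inf
          constructor
          · rintro ⟨hEav, hEcv⟩
            by_cases hEe : G.Edge e v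
            · exact T1.1 ⟨hEav, hEe⟩
            · have hve : G.EW Finset.univ v e := by
                have hadj : G.AdjW Finset.univ v e :=
                  chain'_of_infix_pair hChain ⟨s4 ++ [a], t1' ++ v :: c :: t4, by simp⟩
                rcases hadj with h' | h'
                · exact h'
                · exact absurd h'.1 hEe
              have hseginf : (v :: (e :: t1' ++ [v])) <:+: s4 ++ [a] ++ v :: (e :: t1' ++ v :: c :: t4) :=
                ⟨s4 ++ [a], c :: t4, by simp⟩
              have hch := hChain.infix hseginf
              have hac := acts_infix hActs hseginf
              rcases chase (e :: t1' ++ [v]) v e (by simp) hve hch hac with ⟨d, hd, hdesc⟩ | htg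
              · exact ⟨d, hd, hdesc⟩
              · exfalso
                rw [show (e :: t1' ++ [v]) = (e :: t1') ++ [v] by simp, List.getLast?_concat] at htg
                exact G.acyclic v (transGen_EW_to_edge (by simpa using htg))
          · intro hnc
            by_cases hEav : G.Edge a v
            · exact T2.2 (fun hcol => hnc ⟨hEav, hcol.2⟩)
            · exact T1.2 (fun hcol => absurd hcol.1 hEav)
      have hwalk' : G.Walk Finset.univ Z (l1 ++ v :: t2) :=
        ⟨by simp, hchain', fun z _ => Finset.mem_univ z, hacts'⟩
      have hx' : (l1 ++ v :: t2).head? = some x := by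
        rw [head?_append_cons l1 v t2 (t1 ++ v :: t2)]
        exact hx
      have hy' : (l1 ++ v :: t2).getLast? = some y := by
        rw [List.getLast?_append_cons]
        have h2 := hy
        rw [List.getLast?_append_cons] at h2
        rw [show v :: (t1 ++ v :: t2) = (v :: t1) ++ (v :: t2) by simp,
          List.getLast?_append_cons] at h2
        exact h2
      have hlen' : (l1 ++ v :: t2).length ≤ n := by
        have h0 := hlen
        simp only [List.length_append, List.length_cons] at h0 ⊢
        omega
      exact ih _ x y hlen' hwalk' hx' hy' hxy

end DAG

end GraphLayer3
section GraphLayer4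

namespace DAG
set_option linter.unusedSectionVars false
set_option linter.unusedVariables false

variable {V : Type*} [Fintype V] [DecidableEq V] {G : DAG V}

lemma walk_snoc {W : Finset V} {S : Set V} {p : List V} {u w : V}
    (hp : G.Walk W S p) (hlp : p.getLast? = some u) (hEu : G.Edge u w) (hwW : w ∈ W)
    (hnwu : ¬ G.Edge w u) (huS : u ∉ S) :
    G.Walk W S (p ++ [w]) ∧ (p ++ [w]).head? = p.head? ∧ (p ++ [w]).getLast? = some w := by
  have huW : u ∈ W := hp.2.2.1 u (List.mem_of_mem_getLast? hlp)
  obtain ⟨init, rfl⟩ : ∃ init, p = init ++ [u] := by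
    rcases p.eq_nil_or_concat' with rfl | ⟨L, b, rfl⟩
    · simp at hlp
    · rw [List.getLast?_concat] at hlp
      obtain rfl : b = u := by simpa using hlp
      exact ⟨L, rfl⟩
  refine ⟨⟨by simp, ?_, ?_, ?_⟩, by cases init <;> simp, by simp [List.getLast?_concat]⟩
  · have heq : init ++ [u] ++ [w] = init ++ u :: [w] := by simp
    rw [heq]
    refine chain'_join_mid (by simpa using hp.2.1) ?_
    simp only [List.Chain', List.isChain_cons_cons, List.isChain_singleton, and_true]
    exact Or.inl ⟨hEu, huW, hwW⟩
  · intro z hz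
    rcases List.mem_append.mp hz with h | h
    · exact hp.2.2.1 z h
    · exact (by simpa using h : z = w) ▸ hwW
  · intro a b c habc
    rcases infix_append_cases habc with h | h | ⟨s, t, he1, he2⟩ | ⟨s, t, he1, he2⟩
    · exact hp.2.2.2 a b c h
    · exact absurd h.length_le (by simp)
    · obtain ⟨rfl, rfl⟩ : w = c ∧ ([] : List V) = t := by simpa using he2
      have hbu : b = u := by
        have h' := congrArg List.getLast? he1
        rw [List.getLast?_concat] at h'
        rw [show s ++ [a, b] = (s ++ [a]) ++ [b] by simp, List.getLast?_concat] at h'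
        simpa using h'.symm
      subst hbu
      exact ⟨fun hcc => absurd hcc.2 hnwu, fun _ => huS⟩
    · exfalso
      have h' := congrArg List.length he2
      simp at h'

lemma walk_join {W : Finset V} {S : Set V} {p r : List V} {q q' w : V}
    (hp : G.Walk W S p) (hr : G.Walk W S r) (hlp : p.getLast? = some q)
    (hhr : r.head? = some q') (hEq : G.Edge q w) (hEq' : G.Edge q' w) (hwW : w ∈ W)
    (hnwq : ¬ G.Edge w q) (hnwq' : ¬ G.Edge w q') (hqS : q ∉ S) (hq'S : q' ∉ S)
    (hwS : w ∈ S) :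
    G.Walk W S (p ++ w :: r) ∧ (p ++ w :: r).head? = p.head?
      ∧ (p ++ w :: r).getLast? = r.getLast? := by
  have hqW : q ∈ W := hp.2.2.1 q (List.mem_of_mem_getLast? hlp)
  have hq'W : q' ∈ W := hr.2.2.1 q' (List.mem_of_mem_head? hhr)
  obtain ⟨r', rfl⟩ : ∃ r', r = q' :: r' := by
    rcases r with _ | ⟨z, r'⟩
    · simp at hhr
    · exact ⟨r', by simpa using (by simpa using hhr : z = q') ▸ rfl⟩
  obtain ⟨init, rfl⟩ : ∃ init, p = init ++ [q] := by
    rcases p.eq_nil_or_concat' with rfl | ⟨L, b, rfl⟩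
    · simp at hlp
    · rw [List.getLast?_concat] at hlp
      obtain rfl : b = q := by simpa using hlp
      exact ⟨L, rfl⟩
  refine ⟨⟨by simp, ?_, ?_, ?_⟩, by cases init <;> simp, ?_⟩
  · have heq : init ++ [q] ++ w :: q' :: r' = init ++ q :: (w :: q' :: r') := by simp
    rw [heq]
    refine chain'_join_mid (by simpa using hp.2.1) ?_
    rw [List.Chain', List.isChain_cons_cons]
    refine ⟨Or.inl ⟨hEq, hqW, hwW⟩, ?_⟩
    rw [List.isChain_cons_cons]
    exact ⟨Or.inr ⟨hEq', hq'W, hwW⟩, hr.2.1⟩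
  · intro z hz
    rcases List.mem_append.mp hz with h | h
    · exact hp.2.2.1 z h
    · rcases List.mem_cons.mp h with rfl | h'
      · exact hwW
      · exact hr.2.2.1 z h'
  · intro a b c habc
    rcases infix_append_cases habc with h | h | ⟨s, t, he1, he2⟩ | ⟨s, t, he1, he2⟩
    · exact hp.2.2.2 a b c h
    · rw [List.infix_cons_iff] at h
      rcases h with hpre | hinf
      · obtain ⟨t0, ht0⟩ := hpre
        simp only [List.cons_append, List.cons.injEq] at ht0
        obtain ⟨rfl, rfl, -⟩ := ht0
        exact ⟨fun hcc => absurd hcc.1 hnwq', fun _ => hq'S⟩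
      · exact hr.2.2.2 a b c hinf
    · obtain ⟨rfl, rfl⟩ : w = c ∧ q' :: r' = t := by simpa using he2
      have hbq : b = q := by
        have h' := congrArg List.getLast? he1
        rw [List.getLast?_concat] at h'
        rw [show s ++ [a, b] = (s ++ [a]) ++ [b] by simp, List.getLast?_concat] at h'
        simpa using h'.symm
      subst hbq
      exact ⟨fun hcc => absurd hcc.2 hnwq, fun _ => hqS⟩
    · obtain ⟨rfl, rfl, rfl⟩ : w = b ∧ q' = c ∧ r' = t := by simpa using he2
      have haq : a = q := by
        have h' := congrArg List.getLast? he1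
        rw [List.getLast?_concat, List.getLast?_concat] at h'
        simpa using h'.symm
      subst haq
      exact ⟨fun _ => ⟨w, hwS, Relation.ReflTransGen.refl⟩, fun hnc => absurd ⟨hEq, hEq'⟩ hnc⟩
  · rw [show init ++ [q] ++ w :: q' :: r' = (init ++ [q]) ++ w :: (q' :: r') from rfl,
      List.getLast?_append_cons, List.getLast?_cons_cons]

lemma conn_pair {W : Finset V} {S : Set V} {x y : V} (hE : G.Edge x y) (hx : x ∈ W)
    (hy : y ∈ W) : G.Conn W S x y := by
  refine ⟨[x, y], ⟨by simp, ?_, ?_, ?_⟩, by simp, by simp⟩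
  · simp only [List.Chain', List.isChain_cons_cons, List.isChain_singleton, and_true]
    exact Or.inl ⟨hE, hx, hy⟩
  · intro z hz
    rcases List.mem_cons.mp hz with rfl | hz'
    · exact hx
    · simpa using (by simpa using hz' : z = y) ▸ hy
  · intro a b c habc
    exact absurd habc.length_le (by simp)

lemma Conn.S_up {W : Finset V} {S : Set V} {w x y : V} (hsink : G.SinkW W w)
    (hxw : x ≠ w) (hyw : y ≠ w) (h : G.Conn W (S \ {w}) x y) : G.Conn W S x y := by
  obtain ⟨p, hp, hx, hy⟩ := h
  have hhead : p.head? ≠ some w := by rw [hx]; intro h'; exact hxw (by simpa using h')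
  have hlast : p.getLast? ≠ some w := by rw [hy]; intro h'; exact hyw (by simpa using h')
  have hwp : w ∉ p := sink_not_mem_walk hsink hp (by simp) hhead hlast
  exact ⟨p, ⟨hp.1, hp.2.1, hp.2.2.1, hp.2.2.2.S_up hwp⟩, hx, hy⟩

lemma dsepW.symm {W : Finset V} {A B S : Set V} (h : G.dsepW W A B S) : G.dsepW W B A S :=
  fun y hy x hx hc => h x hx y hy hc.symm

lemma desc_stays_outside {W : Finset V} (hanc : ∀ v ∈ W, ∀ u, G.Edge u v → u ∈ W)
    {c u : V} (h : G.Desc c u) (hc : c ∉ W) : u ∈ W → False := by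
  induction h with
  | refl => exact fun hu => hc hu
  | tail hsteps hstep ih => exact fun hu => ih (hanc _ hu _ hstep)

lemma not_desc_of_sinkW {W : Finset V} (hanc : ∀ v ∈ W, ∀ u, G.Edge u v → u ∈ W)
    {w u : V} (hsink : G.SinkW W w) (hu : u ∈ W) (hne : u ≠ w) : ¬ G.Desc w u := by
  intro h
  rcases h.cases_head with heq | ⟨c, hc, hdesc⟩
  · exact hne heq.symm
  · have hcW : c ∉ W := fun hcW => hsink.2 c hcW hc
    exact desc_stays_outside hanc hdesc hcW hu

end DAG
end GraphLayer4
section MainLayer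

open MeasureTheory ProbabilityTheory
set_option linter.unusedSectionVars false
set_option linter.unusedVariables false
set_option maxHeartbeats 1000000

namespace DAG

variable {V : Type*} [Fintype V] [DecidableEq V]
  {Ω : Type*} [mΩ : MeasurableSpace Ω] [StandardBorelSpace Ω]
  {μ : Measure Ω} [IsFiniteMeasure μ]
  {G : DAG V} {f : V → Ω → ℝ} {hf : ∀ i, Measurable (f i)}

lemma markov_weak (hM : LocalMarkov μ f hf G) {W : Finset V} {w : V}
    (hanc : ∀ v ∈ W, ∀ u, G.Edge u v → u ∈ W) (hsink : G.SinkW W w)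
    {B' C' : Set V} (hB'W : ∀ b ∈ B', b ∈ W) (hB'Q : ∀ b ∈ B', ¬ G.Edge b w)
    (hB'w : w ∉ B') (hC'W : ∀ c ∈ C', c ∈ W) (hC'w : w ∉ C')
    (hQC : G.Parents w ⊆ C') :
    CI μ f hf {w} B' C' := by
  have h0 := hM w
  have hsub : B' ∪ (C' \ G.Parents w) ⊆ G.NonDescNonPar w := by
    intro u hu
    have huW : u ∈ W := by
      rcases hu with h | h
      · exact hB'W u h
      · exact hC'W u h.1
    have hune : u ≠ w := by
      rintro rfl
      rcases hu with h | h
      · exact hB'w h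
      · exact hC'w h.1
    refine ⟨not_desc_of_sinkW hanc hsink huW hune, ?_⟩
    rcases hu with h | h
    · exact hB'Q u h
    · exact fun hE => h.2 hE
  have step1 : CI μ f hf {w} (B' ∪ (C' \ G.Parents w)) (G.Parents w) := h0.mono_right hsub
  have step2 : CI μ f hf {w} B' (G.Parents w ∪ (C' \ G.Parents w)) := step1.weakUnion
  exact step2.congr rfl rfl (Set.union_diff_cancel hQC)

lemma case_sink_in_A (hM : LocalMarkov μ f hf G) {W : Finset V} {w : V}
    (hanc : ∀ v ∈ W, ∀ u, G.Edge u v → u ∈ W) (hsink : G.SinkW W w)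
    {A B S : Set V} (hA : ∀ a ∈ A, a ∈ W) (hB : ∀ b ∈ B, b ∈ W) (hS : ∀ s ∈ S, s ∈ W)
    (hAB : ∀ x ∈ A, x ∉ B) (hAS : ∀ x ∈ A, x ∉ S) (hBS : ∀ x ∈ B, x ∉ S)
    (hwA : w ∈ A) (hsep : G.dsepW W A B S)
    (IH : ∀ A' B' S' : Set V, (∀ a ∈ A', a ∈ W.erase w) → (∀ b ∈ B', b ∈ W.erase w) →
      (∀ s ∈ S', s ∈ W.erase w) → (∀ x ∈ A', x ∉ B') → (∀ x ∈ A', x ∉ S') →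
      (∀ x ∈ B', x ∉ S') → G.dsepW (W.erase w) A' B' S' → CI μ f hf A' B' S') :
    CI μ f hf A B S := by
  classical
  have hwW := hsink.1
  have hQW : ∀ q ∈ G.Parents w, q ∈ W := fun q hq => hanc w hwW q hq
  have hwQ : w ∉ G.Parents w := fun h => no_self_edge G w h
  have hwB : w ∉ B := hAB w hwA
  have hwS : w ∉ S := hAS w hwA
  set C1 : Set V := (G.Parents w \ S) ∪ (A \ {w}) with hC1
  have hBQ : ∀ b ∈ B, ¬ G.Edge b w := by
    intro b hb hE
    exact hsep w hwA b hb ((conn_pair hE (hB b hb) hwW).symm)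
  have hsep1 : G.dsepW (W.erase w) C1 B S := by
    intro x hx y hy hconn
    have hconn' : G.Conn W S x y := hconn.mono (Finset.erase_subset _ _)
    rcases hx with hx | hx
    · obtain ⟨p, hp, hyh, hxl⟩ := hconn'.symm
      have hnwx : ¬ G.Edge w x := hsink.2 x (hQW x hx.1)
      obtain ⟨hw1, hw2, hw3⟩ := walk_snoc hp hxl hx.1 hwW hnwx hx.2
      exact hsep w hwA y hy (Conn.symm ⟨p ++ [w], hw1, by rw [hw2]; exact hyh, hw3⟩)
    · exact hsep x hx.1 y hy hconn'
  have hC1W : ∀ x ∈ C1, x ∈ W.erase w := by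
    intro x hx
    rcases hx with hx | hx
    · exact Finset.mem_erase.mpr ⟨fun h => hwQ (h ▸ hx.1), hQW x hx.1⟩
    · exact Finset.mem_erase.mpr ⟨by simpa using hx.2, hA x hx.1⟩
  have hBW' : ∀ b ∈ B, b ∈ W.erase w :=
    fun b hb => Finset.mem_erase.mpr ⟨fun h => hwB (h ▸ hb), hB b hb⟩
  have hSW' : ∀ s ∈ S, s ∈ W.erase w :=
    fun s hs => Finset.mem_erase.mpr ⟨fun h => hwS (h ▸ hs), hS s hs⟩
  have hd1 : ∀ x ∈ C1, x ∉ B := by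
    intro x hx hxB
    rcases hx with hx | hx
    · exact hBQ x hxB hx.1
    · exact hAB x hx.1 hxB
  have hd2 : ∀ x ∈ C1, x ∉ S := by
    intro x hx
    rcases hx with hx | hx
    · exact hx.2
    · exact hAS x hx.1
  have γ' : CI μ f hf B C1 S := (IH C1 B S hC1W hBW' hSW' hd1 hd2 hBS hsep1).symm'
  have δ'0 : CI μ f hf {w} B (C1 ∪ S) := by
    refine markov_weak hM hanc hsink hB hBQ hwB ?_ ?_ ?_
    · intro c hc
      rcases hc with hc | hc
      · rcases hc with hc | hc
        · exact hQW c hc.1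
        · exact hA c hc.1
      · exact hS c hc
    · intro hc
      rcases hc with hc | hc
      · rcases hc with hc | hc
        · exact hwQ hc.1
        · exact (by simpa using hc.2 : w ≠ w) rfl
      · exact hwS hc
    · intro q hq
      by_cases hqS : q ∈ S
      · exact Or.inr hqS
      · exact Or.inl (Or.inl ⟨hq, hqS⟩)
  have ε' : CI μ f hf B (C1 ∪ {w}) S := γ'.contraction δ'0.symm'
  have hfinal : CI μ f hf B A S := ε'.mono_right (by
    intro a ha
    by_cases haw : a = w
    · exact Or.inr (by simp [haw])
    · exact Or.inl (Or.inr ⟨ha, by simpa using haw⟩))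
  exact hfinal.symm'

lemma connQ_not_both {W : Finset V} {w : V}
    (hanc : ∀ v ∈ W, ∀ u, G.Edge u v → u ∈ W) (hsink : G.SinkW W w)
    {A B S : Set V} (hA : ∀ a ∈ A, a ∈ W) (hB : ∀ b ∈ B, b ∈ W)
    (hAS : ∀ x ∈ A, x ∉ S) (hBS : ∀ x ∈ B, x ∉ S) (hwS : w ∈ S)
    (hsep : G.dsepW W A B S)
    (h1 : ∃ q ∈ G.Parents w \ S, ∃ a ∈ A, G.Conn W (S \ {w}) a q)
    (h2 : ∃ q ∈ G.Parents w \ S, ∃ b ∈ B, G.Conn W (S \ {w}) b q) : False := by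
  obtain ⟨q, hq, a, ha, hc1⟩ := h1
  obtain ⟨q', hq', b, hb, hc2⟩ := h2
  have hwW := hsink.1
  have hQW : ∀ u ∈ G.Parents w, u ∈ W := fun u hu => hanc w hwW u hu
  have hwQ : w ∉ G.Parents w := fun h => no_self_edge G w h
  obtain ⟨p, hp, hph, hpl⟩ := hc1
  obtain ⟨r, hr, hrh, hrl⟩ := hc2
  have hwp : w ∉ p := by
    refine sink_not_mem_walk hsink hp (by simp) ?_ ?_
    · rw [hph]
      intro h'
      exact hAS a ha ((by simpa using h' : a = w) ▸ hwS)
    · rw [hpl]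
      intro h'
      exact hwQ ((by simpa using h' : q = w) ▸ hq.1)
  have hwr : w ∉ r := by
    refine sink_not_mem_walk hsink hr (by simp) ?_ ?_
    · rw [hrh]
      intro h'
      exact hBS b hb ((by simpa using h' : b = w) ▸ hwS)
    · rw [hrl]
      intro h'
      exact hwQ ((by simpa using h' : q' = w) ▸ hq'.1)
  have hp' : G.Walk W S p := ⟨hp.1, hp.2.1, hp.2.2.1, hp.2.2.2.S_up hwp⟩
  have hr' : G.Walk W S r := ⟨hr.1, hr.2.1, hr.2.2.1, hr.2.2.2.S_up hwr⟩
  have hrrev := hr'.reverse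
  obtain ⟨hw1, hw2, hw3⟩ := walk_join hp' hrrev hpl (by simpa using hrl)
    hq.1 hq'.1 hwW (hsink.2 q (hQW q hq.1)) (hsink.2 q' (hQW q' hq'.1)) hq.2 hq'.2 hwS
  exact hsep a ha b hb ⟨p ++ w :: r.reverse, hw1, by rw [hw2]; exact hph,
    by rw [hw3]; simpa using hrh⟩

lemma case_sink_in_S (hM : LocalMarkov μ f hf G) {W : Finset V} {w : V}
    (hanc : ∀ v ∈ W, ∀ u, G.Edge u v → u ∈ W) (hsink : G.SinkW W w)
    {A B S : Set V} (hA : ∀ a ∈ A, a ∈ W) (hB : ∀ b ∈ B, b ∈ W) (hS : ∀ s ∈ S, s ∈ W)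
    (hAB : ∀ x ∈ A, x ∉ B) (hAS : ∀ x ∈ A, x ∉ S) (hBS : ∀ x ∈ B, x ∉ S)
    (hwS : w ∈ S) (hsep : G.dsepW W A B S)
    (hclean : ¬ ∃ q ∈ G.Parents w \ S, ∃ b ∈ B, G.Conn W (S \ {w}) b q)
    (IH : ∀ A' B' S' : Set V, (∀ a ∈ A', a ∈ W.erase w) → (∀ b ∈ B', b ∈ W.erase w) →
      (∀ s ∈ S', s ∈ W.erase w) → (∀ x ∈ A', x ∉ B') → (∀ x ∈ A', x ∉ S') →
      (∀ x ∈ B', x ∉ S') → G.dsepW (W.erase w) A' B' S' → CI μ f hf A' B' S') :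
    CI μ f hf A B S := by
  classical
  have hwW := hsink.1
  have hQW : ∀ q ∈ G.Parents w, q ∈ W := fun q hq => hanc w hwW q hq
  have hwQ : w ∉ G.Parents w := fun h => no_self_edge G w h
  have hwA : w ∉ A := fun h => hAS w h hwS
  have hwB : w ∉ B := fun h => hBS w h hwS
  set C1 : Set V := A ∪ (G.Parents w \ S) with hC1
  have hBQS : ∀ b ∈ B, b ∉ G.Parents w \ S := by
    intro b hb h
    exact hclean ⟨b, h, b, hb, Conn.single (hB b hb)⟩
  have hBQ : ∀ b ∈ B, ¬ G.Edge b w := by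
    intro b hb hE
    by_cases hbS : b ∈ S
    · exact hBS b hb hbS
    · exact hBQS b hb ⟨hE, hbS⟩
  have hsep1 : G.dsepW (W.erase w) C1 B (S \ {w}) := by
    intro x hx y hy hconn
    have hconn' : G.Conn W (S \ {w}) x y := hconn.mono (Finset.erase_subset _ _)
    rcases hx with hx | hx
    · refine hsep x hx y hy (hconn'.S_up hsink ?_ ?_)
      · rintro rfl; exact hwA hx
      · rintro rfl; exact hwB hy
    · exact hclean ⟨x, hx, y, hy, hconn'.symm⟩
  have hC1W : ∀ x ∈ C1, x ∈ W.erase w := by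
    intro x hx
    rcases hx with hx | hx
    · exact Finset.mem_erase.mpr ⟨fun h => hwA (h ▸ hx), hA x hx⟩
    · exact Finset.mem_erase.mpr ⟨fun h => hwQ (h ▸ hx.1), hQW x hx.1⟩
  have hBW' : ∀ b ∈ B, b ∈ W.erase w :=
    fun b hb => Finset.mem_erase.mpr ⟨fun h => hwB (h ▸ hb), hB b hb⟩
  have hSW' : ∀ s ∈ S \ {w}, s ∈ W.erase w :=
    fun s hs => Finset.mem_erase.mpr ⟨by simpa using hs.2, hS s hs.1⟩
  have hd1 : ∀ x ∈ C1, x ∉ B := by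
    intro x hx hxB
    rcases hx with hx | hx
    · exact hAB x hx hxB
    · exact hBQS x hxB hx
  have hd2 : ∀ x ∈ C1, x ∉ S \ {w} := by
    intro x hx hxS
    rcases hx with hx | hx
    · exact hAS x hx hxS.1
    · exact hx.2 hxS.1
  have hd3 : ∀ x ∈ B, x ∉ S \ {w} := fun x hx hxS => hBS x hx hxS.1
  have γ : CI μ f hf B C1 (S \ {w}) := (IH C1 B (S \ {w}) hC1W hBW' hSW' hd1 hd2 hd3 hsep1).symm'
  have δ0 : CI μ f hf {w} B (C1 ∪ (S \ {w})) := by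
    refine markov_weak hM hanc hsink hB hBQ hwB ?_ ?_ ?_
    · intro c hc
      rcases hc with hc | hc
      · rcases hc with hc | hc
        · exact hA c hc
        · exact hQW c hc.1
      · exact hS c hc.1
    · intro hc
      rcases hc with hc | hc
      · rcases hc with hc | hc
        · exact hwA hc
        · exact hwQ hc.1
      · exact (by simpa using hc.2 : w ≠ w) rfl
    · intro q hq
      by_cases hqS : q ∈ S
      · exact Or.inr ⟨hqS, by intro h; exact hwQ ((by simpa using h : q = w) ▸ hq)⟩
      · exact Or.inl (Or.inr ⟨hq, hqS⟩)
  have ε : CI μ f hf B (C1 ∪ {w}) (S \ {w}) := γ.contraction δ0.symm'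
  have ζ : CI μ f hf B C1 ((S \ {w}) ∪ {w}) := ε.weakUnion
  have hSeq : (S \ {w}) ∪ {w} = S := Set.diff_union_of_subset (Set.singleton_subset_iff.mpr hwS)
  have hfinal : CI μ f hf B A S := (ζ.congr rfl rfl hSeq).mono_right Set.subset_union_left
  exact hfinal.symm'

lemma main_induction (hM : LocalMarkov μ f hf G) :
    ∀ (n : ℕ) (W : Finset V), W.card ≤ n →
      (∀ v ∈ W, ∀ u, G.Edge u v → u ∈ W) →
      ∀ A B S : Set V, (∀ a ∈ A, a ∈ W) → (∀ b ∈ B, b ∈ W) → (∀ s ∈ S, s ∈ W) →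
      (∀ x ∈ A, x ∉ B) → (∀ x ∈ A, x ∉ S) → (∀ x ∈ B, x ∉ S) →
      G.dsepW W A B S → CI μ f hf A B S := by
  intro n
  induction n with
  | zero =>
    intro W hcard hanc A B S hA hB hS _ _ _ _
    have hW : W = ∅ := Finset.card_eq_zero.mp (Nat.le_zero.mp hcard)
    subst hW
    have hAe : A = ∅ := Set.eq_empty_iff_forall_notMem.mpr
      (fun a ha => by simpa using hA a ha)
    rw [hAe]
    exact CI_empty_left B S
  | succ n ih =>
    intro W hcard hanc A B S hA hB hS hAB hAS hBS hsep
    rcases W.eq_empty_or_nonempty with rfl | hWne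
    · have hAe : A = ∅ := Set.eq_empty_iff_forall_notMem.mpr
        (fun a ha => by simpa using hA a ha)
      rw [hAe]
      exact CI_empty_left B S
    have hcard' : ∀ w, G.SinkW W w → (W.erase w).card ≤ n := by
      intro w hw
      rw [Finset.card_erase_of_mem hw.1]
      omega
    have hanc' : ∀ w, G.SinkW W w →
        ∀ v ∈ W.erase w, ∀ u, G.Edge u v → u ∈ W.erase w := by
      intro w hw v hv u hE
      have hvW : v ∈ W := Finset.mem_of_mem_erase hv
      refine Finset.mem_erase.mpr ⟨?_, hanc v hvW u hE⟩
      rintro rfl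
      exact hw.2 v hvW hE
    by_cases hex : ∃ w, G.SinkW W w ∧ w ∉ A ∧ w ∉ B ∧ w ∉ S
    · obtain ⟨w, hsink, hwA, hwB, hwS⟩ := hex
      refine ih (W.erase w) (hcard' w hsink) (hanc' w hsink) A B S ?_ ?_ ?_ hAB hAS hBS ?_
      · exact fun a ha => Finset.mem_erase.mpr ⟨fun h => hwA (h ▸ ha), hA a ha⟩
      · exact fun b hb => Finset.mem_erase.mpr ⟨fun h => hwB (h ▸ hb), hB b hb⟩
      · exact fun s hs => Finset.mem_erase.mpr ⟨fun h => hwS (h ▸ hs), hS s hs⟩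
      · exact fun x hx y hy hc => hsep x hx y hy (hc.mono (Finset.erase_subset _ _))
    · obtain ⟨w, hsink⟩ := exists_sinkW G W hWne
      have IH' := fun A' B' S' hA' hB' hS' h1 h2 h3 hsep' =>
        ih (W.erase w) (hcard' w hsink) (hanc' w hsink) A' B' S' hA' hB' hS' h1 h2 h3 hsep'
      have hmem : w ∈ A ∨ w ∈ B ∨ w ∈ S := by
        by_contra hc
        push_neg at hc
        exact hex ⟨w, hsink, hc.1, hc.2.1, hc.2.2⟩
      have hBA : ∀ x ∈ B, x ∉ A := fun x hx ha => hAB x ha hx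
      rcases hmem with hw | hw | hw
      · exact case_sink_in_A hM hanc hsink hA hB hS hAB hAS hBS hw hsep IH'
      · exact (case_sink_in_A hM hanc hsink hB hA hS hBA hBS hAS hw hsep.symm IH').symm'
      · by_cases hcl : ∃ q ∈ G.Parents w \ S, ∃ b ∈ B, G.Conn W (S \ {w}) b q
        · have hclA : ¬ ∃ q ∈ G.Parents w \ S, ∃ a ∈ A, G.Conn W (S \ {w}) a q :=
            fun hclA => connQ_not_both hanc hsink hA hB hAS hBS hw hsep hclA hcl
          exact (case_sink_in_S hM hanc hsink hB hA hS hBA hBS hAS hw hsep.symm hclA IH').symm'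
        · exact case_sink_in_S hM hanc hsink hA hB hS hAB hAS hBS hw hsep hcl IH'

end DAG

end MainLayer

/-- If `X` is d-separated from `Y` conditional on `Z` in a DAG `G`, then in
every probability distribution satisfying the local directed Markov condition for `G`,
`X` is independent of `Y` conditional on `Z`. -/
theorem dsep_implies_condIndep
    {V : Type*} [Fintype V] [DecidableEq V]
    {Ω : Type*} [mΩ : MeasurableSpace Ω] [StandardBorelSpace Ω]
    (μ : Measure Ω) [IsProbabilityMeasure μ]
    (G : DAG V) (f : V → Ω → ℝ) (hf : ∀ i, Measurable (f i))
    (hMarkov : LocalMarkov μ f hf G)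
    (X Y : V) (Z : Set V) (hXY : X ≠ Y) (hXZ : X ∉ Z) (hYZ : Y ∉ Z)
    (hsep : G.DSep X Y Z) :
    CI μ f hf {X} {Y} Z := by
  have hsep' : G.dsepW Finset.univ {X} {Y} Z := by
    intro x hx y hy hconn
    obtain rfl : x = X := hx
    obtain rfl : y = Y := hy
    obtain ⟨p, hp, hph, hpl⟩ := hconn
    exact hsep (DAG.exists_activePath_of_walk p.length p x y le_rfl hp hph hpl hXY)
  refine DAG.main_induction hMarkov (Fintype.card V) Finset.univ ?_
    (fun v _ u _ => Finset.mem_univ u) {X} {Y} Z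
    (fun a _ => Finset.mem_univ a) (fun a _ => Finset.mem_univ a) (fun a _ => Finset.mem_univ a)
    ?_ ?_ ?_ hsep'
  · simp
  · intro x hx
    obtain rfl : x = X := hx
    simpa using hXY
  · intro x hx
    obtain rfl : x = X := hx
    exact hXZ
  · intro x hx
    obtain rfl : x = Y := hx
    exact hYZ
end

section
/- In a DAG G, two vertices X and Y are adjacent if and only if X is not d-separated from Y conditional on any subset of the other vertices of G. -/
namespace DAG

variable {V : Type*} {G : DAG V}

lemma not_both' {x y : V} (h1 : G.Edge x y) (h2 : G.Edge y x) : False :=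
  G.acyclic x (.tail (.single h1) h2)

lemma infix_of_getElem' {p : List V} {i : ℕ} (h : i + 2 < p.length) :
    [p[i]'(by omega), p[i+1]'(by omega), p[i+2]'h] <:+: p := by
  refine ⟨p.take i, p.drop (i+3), ?_⟩
  have h1 := List.drop_eq_getElem_cons (l := p) (i := i) (by omega)
  have h2 := List.drop_eq_getElem_cons (l := p) (i := i+1) (by omega)
  have h3 := List.drop_eq_getElem_cons (l := p) (i := i+2) (by omega)
  have := List.take_append_drop i p
  rw [h1, h2, h3] at this
  simpa using this

lemma infix_index' {p : List V} (hnd : p.Nodup) {a b c : V}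
    (hinf : [a, b, c] <:+: p) {i : ℕ} (hi : i + 1 < p.length)
    (hb : p[i+1] = b) : i + 2 < p.length ∧ ∀ h : i + 2 < p.length,
      a = p[i]'(by omega) ∧ c = p[i+2]'h := by
  obtain ⟨s, t, he⟩ := hinf
  subst he
  have hlen : (s ++ [a, b, c] ++ t).length = s.length + 3 + t.length := by
    simp; omega
  have hb' : (s ++ [a, b, c] ++ t)[s.length + 1]'(by omega) = b := by
    simp [List.getElem_append]
  have heq : s.length + 1 = i + 1 :=
    (hnd.getElem_inj_iff).mp (hb'.trans hb.symm)
  have hs : s.length = i := by omega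
  subst hs
  refine ⟨by omega, fun h => ⟨?_, ?_⟩⟩
  · have ha : (s ++ [a, b, c] ++ t)[s.length]'(by omega) = a := by
      simp [List.getElem_append]
    exact ha.symm
  · have hc : (s ++ [a, b, c] ++ t)[s.length + 2]'(by omega) = c := by
      simp [List.getElem_append]
    exact hc.symm

/-- Main lemma: if X,Y are nonadjacent and Y is not a descendant of X, then
there is no active path from X to Y given the parents of X. -/
lemma no_active_path' {X Y : V} (hXY : X ≠ Y) (hnadj : ¬ G.Adj X Y)
    (hnd : ¬ G.Desc X Y) {p : List V}
    (hp : G.ActivePath p X Y (G.Parents X)) : False := by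
  obtain ⟨hnodup, hlen, hchain, hhead, hlast, hact⟩ := hp
  have hpos : 0 < p.length := by omega
  have hX : p[0] = X := by
    cases p with
    | nil => simp at hhead
    | cons a q => simpa using hhead
  have hY : p[p.length - 1] = Y := by
    rw [List.getLast?_eq_getElem?, List.getElem?_eq_getElem (by omega)] at hlast
    simpa using hlast
  have hchain' := List.isChain_iff_getElem.mp hchain
  -- rule out length 2
  have hlen3 : 3 ≤ p.length := by
    by_contra hcon
    have h2 : p.length = 2 := by omega
    have := hchain' 0 (by omega)
    rw [hX] at this
    have : G.Adj X Y := by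
      have hY' : p[1] = Y := by rw [← hY]; congr 1; omega
      rwa [hY'] at this
    exact hnadj this
  -- key induction: the path is directed from X towards Y
  have key : ∀ i, (h : i + 1 < p.length) →
      G.Edge (p[i]'(by omega)) (p[i+1]'h) ∧
      Relation.ReflTransGen G.Edge X (p[i+1]'h) := by
    intro i
    induction i with
    | zero =>
      intro h
      have hadj := hchain' 0 (by omega)
      rw [hX] at hadj
      cases hadj with
      | inl hE => exact ⟨by rwa [hX], Relation.ReflTransGen.single hE⟩
      | inr hE =>
        exfalso
        have hmem : p[1] ∈ p := List.getElem_mem _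
        have hne1 : p[1] ≠ X := by
          rw [← hX]; intro hc
          have := (hnodup.getElem_inj_iff).mp hc; omega
        have hne2 : p[1] ≠ Y := by
          rw [← hY]; intro hc
          have := (hnodup.getElem_inj_iff).mp hc; omega
        rcases hact _ hmem with h1 | h1 | ⟨_, h1⟩ | ⟨⟨a, c, hinf, hEa, _⟩, _⟩
        · exact hne1 h1
        · exact hne2 h1
        · exact h1 hE
        · obtain ⟨_, ha⟩ := infix_index' hnodup hinf (i := 0) (by omega) rfl
          obtain ⟨ha, _⟩ := ha (by omega)
          rw [ha, hX] at hEa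
          exact not_both' hEa hE
    | succ k ih =>
      intro h
      obtain ⟨hEk, hRk⟩ := ih (by omega)
      have hadj := hchain' (k+1) (by omega)
      cases hadj with
      | inl hE => exact ⟨hE, hRk.tail hE⟩
      | inr hE =>
        exfalso
        have hcol : G.ColliderOn p (p[k+1]'(by omega)) :=
          ⟨_, _, infix_of_getElem' (by omega), hEk, hE⟩
        have hmem : p[k+1]'(by omega) ∈ p := List.getElem_mem _
        have hne1 : p[k+1]'(by omega) ≠ X := by
          rw [← hX]; intro hc
          have := (hnodup.getElem_inj_iff).mp hc; omega
        have hne2 : p[k+1]'(by omega) ≠ Y := by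
          rw [← hY]; intro hc
          have := (hnodup.getElem_inj_iff).mp hc; omega
        rcases hact _ hmem with h1 | h1 | ⟨h1, _⟩ | ⟨_, d, hd, hdesc⟩
        · exact hne1 h1
        · exact hne2 h1
        · exact h1 hcol
        · -- d is a parent of X and a descendant of the collider: cycle
          exact G.acyclic X (Relation.TransGen.trans_right hRk
            (Relation.TransGen.tail' hdesc hd))
  -- conclude Y is a descendant of X, contradiction
  have := (key (p.length - 2) (by omega)).2
  have hY' : p[p.length - 2 + 1]'(by omega) = Y := by
    rw [← hY]; congr 1; omega
  rw [hY'] at this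
  exact hnd this

/-- Reversal of an active path. -/
lemma activePath_reverse' {p : List V} {x y : V} {Z : Set V}
    (hp : G.ActivePath p x y Z) : G.ActivePath p.reverse y x Z := by
  obtain ⟨hnodup, hlen, hchain, hhead, hlast, hact⟩ := hp
  have hcol : ∀ b, G.ColliderOn p.reverse b ↔ G.ColliderOn p b := by
    intro b
    constructor
    · rintro ⟨a, c, hinf, hEa, hEc⟩
      refine ⟨c, a, ?_, hEc, hEa⟩
      have : [a, b, c] <:+: p.reverse := hinf
      rw [show [a,b,c] = [c,b,a].reverse by rfl] at this
      exact (List.reverse_infix).mp this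
    · rintro ⟨a, c, hinf, hEa, hEc⟩
      refine ⟨c, a, ?_, hEc, hEa⟩
      rw [show [c,b,a] = ([a,b,c].reverse) by rfl]
      exact (List.reverse_infix).mpr hinf
  refine ⟨List.nodup_reverse.mpr hnodup, by simpa using hlen, ?_, ?_, ?_, ?_⟩
  · rw [List.Chain', List.isChain_reverse]
    exact hchain.imp (fun a b h => h.symm)
  · rw [List.head?_reverse]; exact hlast
  · rw [← List.head?_reverse, List.reverse_reverse]; exact hhead
  · intro b hb
    rw [List.mem_reverse] at hb
    rcases hact b hb with h1 | h1 | ⟨h1, h2⟩ | ⟨h1, h2⟩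
    · exact Or.inr (Or.inl h1)
    · exact Or.inl h1
    · exact Or.inr (Or.inr (Or.inl ⟨fun hc => h1 ((hcol b).mp hc), h2⟩))
    · exact Or.inr (Or.inr (Or.inr ⟨(hcol b).mpr h1, h2⟩))

end DAG

/-- In a DAG `G`, vertices `X` and `Y` are adjacent iff `X` is not
d-separated from `Y` conditional on any subset of the other vertices of `G`. -/
theorem adjacent_iff_not_dsep_any_subset
    {V : Type*} [Fintype V] [DecidableEq V] (G : DAG V) (X Y : V) (hXY : X ≠ Y) :
    G.Adj X Y ↔ ∀ W : Set V, X ∉ W → Y ∉ W → ¬ G.DSep X Y W := by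
  constructor
  · intro hadj W _ _ hsep
    refine hsep ⟨[X, Y], ?_, by simp, by simp [DAG.Adj, List.Chain'] at hadj ⊢; tauto, rfl, rfl, ?_⟩
    · simp [hXY]
    · intro b hb
      simp at hb
      rcases hb with h | h <;> simp [DAG.ActiveOn, h]
  · intro h
    by_contra hnadj
    have hd : ¬ (G.Desc X Y) ∨ ¬ (G.Desc Y X) := by
      by_contra hc
      push_neg at hc
      obtain ⟨h1, h2⟩ := hc
      rcases (Relation.reflTransGen_iff_eq_or_transGen.mp h1) with h1' | h1'
      · exact hXY h1'.symm
      · exact G.acyclic X (h1'.trans_left h2)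
    rcases hd with hd | hd
    · have hXW : X ∉ G.Parents X := fun hc => G.acyclic X (.single hc)
      have hYW : Y ∉ G.Parents X := fun hc => hnadj (Or.inr hc)
      obtain ⟨p, hp⟩ := not_not.mp (h _ hXW hYW)
      exact DAG.no_active_path' hXY hnadj hd hp
    · have hXW : X ∉ G.Parents Y := fun hc => hnadj (Or.inl hc)
      have hYW : Y ∉ G.Parents Y := fun hc => G.acyclic Y (.single hc)
      obtain ⟨p, hp⟩ := not_not.mp (h _ hXW hYW)
      exact DAG.no_active_path' hXY.symm (fun hc => hnadj hc.symm)
        hd (DAG.activePath_reverse' hp)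
end

section
/- Let M be a recursive linear Gaussian structural equation model over standardized variables V with DAG G. Suppose X_j is not an ancestor of X_i, the edge coefficient of X_i → X_j is b, the conditional variance of every variable given all other variables is at least J > 0, and X[1,...,j] is an ancestral set containing X_i and X_j but no descendant of X_j. Then |b|/√J ≥ |ρ(X_i, X_j | X[1,...,j-1] \ {X_i})| ≥ |b|·√J, where ρ denotes the partial correlation under the model distribution. -/
open Matrix

namespace SEM

variable {m : ℕ}

/-- `B` is strictly lower triangular (with respect to a causal order):
`B p q` is the structural coefficient of the edge `X_q → X_p`, and all
edges go from smaller to larger indices. -/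
def StrictLower (B : Matrix (Fin m) (Fin m) ℝ) : Prop :=
  ∀ p q : Fin m, p ≤ q → B p q = 0

/-- The covariance matrix of the recursive linear Gaussian SEM `X = B X + ε`,
where the errors `ε` are independent with diagonal covariance matrix `D`:
`Σ = (I − B)⁻¹ D (I − B)⁻ᵀ`. -/
noncomputable def cov (B D : Matrix (Fin m) (Fin m) ℝ) : Matrix (Fin m) (Fin m) ℝ :=
  (1 - B)⁻¹ * D * ((1 - B)ᵀ)⁻¹

/-- The conditional covariance matrix of `(X_i, X_j)` given the variables indexed by
`W`, obtained from the covariance matrix `S` by the Schur complement. -/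
noncomputable def condCov (S : Matrix (Fin m) (Fin m) ℝ) (i j : Fin m)
    (W : Finset (Fin m)) : Matrix (Fin 2) (Fin 2) ℝ :=
  S.submatrix ![i, j] ![i, j] -
    S.submatrix ![i, j] (Subtype.val : {x // x ∈ W} → Fin m) *
      (S.submatrix (Subtype.val : {x // x ∈ W} → Fin m)
        (Subtype.val : {x // x ∈ W} → Fin m))⁻¹ *
      S.submatrix (Subtype.val : {x // x ∈ W} → Fin m) ![i, j]

/-- The partial correlation of `X_i` and `X_j` given the variables indexed by `W`. -/
noncomputable def parcorr (S : Matrix (Fin m) (Fin m) ℝ) (i j : Fin m)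
    (W : Finset (Fin m)) : ℝ :=
  condCov S i j W 0 1 / Real.sqrt (condCov S i j W 0 0 * condCov S i j W 1 1)

/-- The directed edge relation of the SEM: `q → p` iff `B p q ≠ 0`. -/
def Edge (B : Matrix (Fin m) (Fin m) ℝ) (q p : Fin m) : Prop := B p q ≠ 0

/-- `p` is a descendant of `q` (reflexive). -/
def Desc (B : Matrix (Fin m) (Fin m) ℝ) (q p : Fin m) : Prop :=
  Relation.ReflTransGen (Edge B) q p

/-- A set of variables is ancestral: closed under taking parents. -/
def Ancestral (B : Matrix (Fin m) (Fin m) ℝ) (A : Finset (Fin m)) : Prop :=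
  ∀ p ∈ A, ∀ q : Fin m, Edge B q p → q ∈ A

/-- The structural coefficient `e_M(X — Z)` of the edge between adjacent `x` and `z`. -/
noncomputable def eCoef (B : Matrix (Fin m) (Fin m) ℝ) (x z : Fin m) : ℝ :=
  if B z x ≠ 0 then B z x else B x z

end SEM

open SEM Matrix

section AuxSEMLemma2
set_option linter.unusedSectionVars false

variable {n o : Type*} [Fintype n] [DecidableEq n] [Fintype o] [DecidableEq o]

lemma posDef_submatrix_of_injective {M : Matrix n n ℝ} (hM : M.PosDef)
    {f : o → n} (hf : Function.Injective f) : (M.submatrix f f).PosDef := by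
  refine posDef_iff_dotProduct_mulVec.mpr ⟨?_, ?_⟩
  · have h := hM.1
    ext a b
    simp only [conjTranspose_apply, submatrix_apply, star_trivial]
    conv_rhs => rw [← h.apply]
    simp
  · intro x hx
    set y : n → ℝ := fun k => ∑ a, if f a = k then x a else 0 with hy
    have key : ∀ g : n → ℝ, ∑ k, y k * g k = ∑ a, x a * g (f a) := by
      intro g
      simp only [hy, Finset.sum_mul]
      rw [Finset.sum_comm]
      refine Finset.sum_congr rfl fun a _ => ?_
      simp only [ite_mul, zero_mul]
      rw [Finset.sum_ite_eq Finset.univ (f a) (fun k => x a * g k)]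
      simp
    have hyval : ∀ a, y (f a) = x a := by
      intro a
      rw [hy]
      simp only
      rw [Finset.sum_eq_single a (fun b _ hb => by simp [hf.ne hb]) (by simp)]
      simp
    have hyne : y ≠ 0 := by
      intro h0
      apply hx
      funext a
      have := congrFun h0 (f a)
      rw [hyval a] at this
      simpa using this
    have hform : x ⬝ᵥ (M.submatrix f f) *ᵥ x = y ⬝ᵥ M *ᵥ y := by
      simp only [dotProduct, mulVec, dotProduct, submatrix_apply]
      rw [key (fun k => ∑ l, M k l * y l)]
      refine Finset.sum_congr rfl fun a _ => ?_
      congr 1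
      have : ∀ l, M (f a) l * y l = y l * M (f a) l := fun l => mul_comm _ _
      calc ∑ b, M (f a) (f b) * x b = ∑ b, x b * M (f a) (f b) := by simp_rw [mul_comm]
        _ = ∑ l, y l * M (f a) l := (key _).symm
        _ = ∑ l, M (f a) l * y l := by simp_rw [this]
    have := hM.dotProduct_mulVec_pos hyne
    rw [star_trivial] at this
    calc (0:ℝ) < y ⬝ᵥ M *ᵥ y := this
      _ = x ⬝ᵥ (M.submatrix f f) *ᵥ x := hform.symm
      _ = star x ⬝ᵥ (M.submatrix f f) *ᵥ x := by rw [star_trivial]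

lemma tdt_apply (K : Matrix n n ℝ) (w : n → ℝ) (p q : n) :
    (Kᵀ * Matrix.diagonal w * K) p q = ∑ k, K k p * w k * K k q := by
  rw [mul_assoc, Matrix.mul_apply]
  refine Finset.sum_congr rfl fun k _ => ?_
  rw [Matrix.transpose_apply, Matrix.diagonal_mul]
  ring


lemma posDef_conj {E K : Matrix n n ℝ} (hE : E.PosDef) (hK : IsUnit K.det) :
    (Kᵀ * E * K).PosDef := by
  have hKT : Kᵀ = Kᴴ := by ext a b; simp [Matrix.conjTranspose_apply]
  refine posDef_iff_dotProduct_mulVec.mpr ⟨?_, ?_⟩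
  · rw [hKT]
    exact Matrix.isHermitian_conjTranspose_mul_mul K hE.1
  · intro x hx
    have hKx : K *ᵥ x ≠ 0 := by
      intro h0
      apply hx
      have : (K⁻¹ * K) *ᵥ x = K⁻¹ *ᵥ (K *ᵥ x) := (Matrix.mulVec_mulVec _ _ _).symm
      rw [Matrix.nonsing_inv_mul K hK, Matrix.one_mulVec, h0, Matrix.mulVec_zero] at this
      exact this
    have h := hE.dotProduct_mulVec_pos hKx
    rw [star_trivial] at h
    rw [star_trivial]
    calc (0:ℝ) < (K *ᵥ x) ⬝ᵥ E *ᵥ (K *ᵥ x) := h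
      _ = x ⬝ᵥ (Kᵀ * E * K) *ᵥ x := by
          rw [← Matrix.mulVec_mulVec, ← Matrix.mulVec_mulVec,
            Matrix.dotProduct_mulVec x, Matrix.vecMul_transpose]


/-- Cauchy–Schwarz: for positive definite `M`, `1 ≤ M i i * M⁻¹ i i`. -/
lemma one_le_diag_mul_inv_diag {M : Matrix n n ℝ} (hM : M.PosDef) (i : n) :
    0 < M⁻¹ i i ∧ 1 ≤ M i i * M⁻¹ i i := by
  have hNpd := hM.inv
  have hdu : IsUnit M.det := isUnit_iff_ne_zero.mpr hM.det_pos.ne'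
  set u : n → ℝ := Pi.single i 1 with hu
  have hudot : ∀ v : n → ℝ, u ⬝ᵥ v = v i := by
    intro v; simp [hu, dotProduct, Pi.single_apply]
  have hdotu : ∀ v : n → ℝ, v ⬝ᵥ u = v i := by
    intro v; simp [hu, dotProduct, Pi.single_apply]
  have hMvu : ∀ (A : Matrix n n ℝ), (A *ᵥ u) = fun k => A k i := by
    intro A; funext k; simp [hu, Matrix.mulVec, dotProduct, Pi.single_apply]
  have hune : u ≠ 0 := by
    intro h; have := congrFun h i; simp [hu] at this
  have hrho : 0 < M⁻¹ i i := by
    have h := hNpd.dotProduct_mulVec_pos hune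
    rw [star_trivial, hudot, hMvu] at h
    exact h
  refine ⟨hrho, ?_⟩
  set w : n → ℝ := M⁻¹ *ᵥ u with hw
  set t : ℝ := (M⁻¹ i i)⁻¹ with ht
  have hMw : M *ᵥ w = u := by
    rw [hw, Matrix.mulVec_mulVec, Matrix.mul_nonsing_inv M hdu, Matrix.one_mulVec]
  have hMT : Mᵀ = M := by
    have h2 : Mᵀ = Mᴴ := by ext a b; simp [Matrix.conjTranspose_apply]
    rw [h2]; exact hM.1
  have h1 : u ⬝ᵥ M *ᵥ u = M i i := by rw [hudot, hMvu]
  have h2 : u ⬝ᵥ u = 1 := by rw [hudot]; simp [hu]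
  have h3 : w ⬝ᵥ M *ᵥ u = 1 := by
    rw [Matrix.dotProduct_mulVec, ← Matrix.mulVec_transpose, hMT, hMw, h2]
  have h4 : w ⬝ᵥ u = M⁻¹ i i := by rw [hdotu, hw, hMvu]
  have key : 0 ≤ (u - t • w) ⬝ᵥ M *ᵥ (u - t • w) := by
    have := hM.posSemidef.dotProduct_mulVec_nonneg (u - t • w)
    rwa [star_trivial] at this
  have expand : (u - t • w) ⬝ᵥ M *ᵥ (u - t • w)
      = M i i - 2 * t + t ^ 2 * (M⁻¹ i i) := by
    rw [Matrix.mulVec_sub, Matrix.mulVec_smul, hMw]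
    simp only [sub_dotProduct, dotProduct_sub, smul_dotProduct,
      dotProduct_smul, h1, h2, h3, h4, smul_eq_mul]
    ring
  rw [expand, ht] at key
  have hkey2 : (M⁻¹ i i)⁻¹ ≤ M i i := by
    have hti : ((M⁻¹ i i)⁻¹) ^ 2 * (M⁻¹ i i) = (M⁻¹ i i)⁻¹ := by
      rw [sq, mul_assoc, inv_mul_cancel₀ hrho.ne', mul_one]
    nlinarith [key, hti]
  have := mul_le_mul_of_nonneg_right hkey2 (le_of_lt hrho)
  rwa [inv_mul_cancel₀ hrho.ne'] at this

end AuxSEMLemma2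

section AuxSEMLemma2b

lemma schur_complement_eq_inv_block {α β : Type*} [Fintype α] [DecidableEq α] [Fintype β] [DecidableEq β] {M : Matrix (α ⊕ β) (α ⊕ β) ℝ} (hM : M.PosDef) :
    M.toBlocks₁₁ - M.toBlocks₁₂ * (M.toBlocks₂₂)⁻¹ * M.toBlocks₂₁ = ((M⁻¹).toBlocks₁₁)⁻¹ := by
  have hdu : IsUnit M.det := isUnit_iff_ne_zero.mpr hM.det_pos.ne'
  have hD : (M.toBlocks₂₂).PosDef :=
    posDef_submatrix_of_injective hM Sum.inr_injective
  have hN : (M⁻¹).PosDef := hM.inv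
  have hDdu : IsUnit (M.toBlocks₂₂).det := isUnit_iff_ne_zero.mpr hD.det_pos.ne'
  have hMN : M * M⁻¹ = 1 := Matrix.mul_nonsing_inv M hdu
  have hblock : (Matrix.fromBlocks M.toBlocks₁₁ M.toBlocks₁₂ M.toBlocks₂₁ M.toBlocks₂₂) *
      (Matrix.fromBlocks (M⁻¹).toBlocks₁₁ (M⁻¹).toBlocks₁₂ (M⁻¹).toBlocks₂₁ (M⁻¹).toBlocks₂₂)
      = Matrix.fromBlocks 1 0 0 1 := by
    rw [Matrix.fromBlocks_toBlocks, Matrix.fromBlocks_toBlocks, hMN, Matrix.fromBlocks_one]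
  rw [Matrix.fromBlocks_multiply] at hblock
  have h1 := congrArg Matrix.toBlocks₁₁ hblock
  rw [Matrix.toBlocks_fromBlocks₁₁, Matrix.toBlocks_fromBlocks₁₁] at h1
  have h3 := congrArg Matrix.toBlocks₂₁ hblock
  rw [Matrix.toBlocks_fromBlocks₂₁, Matrix.toBlocks_fromBlocks₂₁] at h3
  have hN21 : (M⁻¹).toBlocks₂₁ = -((M.toBlocks₂₂)⁻¹ * (M.toBlocks₂₁ * (M⁻¹).toBlocks₁₁)) := by
    have h3' : M.toBlocks₂₂ * (M⁻¹).toBlocks₂₁ = -(M.toBlocks₂₁ * (M⁻¹).toBlocks₁₁) := by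
      rw [eq_neg_iff_add_eq_zero, add_comm]; exact h3
    calc (M⁻¹).toBlocks₂₁ = (M.toBlocks₂₂)⁻¹ * (M.toBlocks₂₂ * (M⁻¹).toBlocks₂₁) :=
          (Matrix.nonsing_inv_mul_cancel_left _ _ hDdu).symm
      _ = -((M.toBlocks₂₂)⁻¹ * (M.toBlocks₂₁ * (M⁻¹).toBlocks₁₁)) := by
          rw [h3', Matrix.mul_neg]
  have e1 : M.toBlocks₁₂ * (M.toBlocks₂₂)⁻¹ * M.toBlocks₂₁ * (M⁻¹).toBlocks₁₁
      = M.toBlocks₁₂ * ((M.toBlocks₂₂)⁻¹ * (M.toBlocks₂₁ * (M⁻¹).toBlocks₁₁)) := by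
    rw [Matrix.mul_assoc, Matrix.mul_assoc]
  have e2 : M.toBlocks₁₂ * (M⁻¹).toBlocks₂₁
      = -(M.toBlocks₁₂ * ((M.toBlocks₂₂)⁻¹ * (M.toBlocks₂₁ * (M⁻¹).toBlocks₁₁))) := by
    rw [hN21, Matrix.mul_neg]
  have hA : M.toBlocks₁₁ * (M⁻¹).toBlocks₁₁ = 1 - M.toBlocks₁₂ * (M⁻¹).toBlocks₂₁ :=
    eq_sub_iff_add_eq.mpr h1
  have hfin : (M.toBlocks₁₁ - M.toBlocks₁₂ * (M.toBlocks₂₂)⁻¹ * M.toBlocks₂₁) *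
      (M⁻¹).toBlocks₁₁ = 1 := by
    rw [Matrix.sub_mul, e1, hA, e2]
    abel
  exact (Matrix.inv_eq_left_inv hfin).symm

lemma mem_map_castLE {n m : ℕ} (h : n ≤ m) (x : Fin m) :
    x ∈ Finset.univ.map (Fin.castLEEmb h) ↔ (x : ℕ) < n := by
  simp only [Finset.mem_map, Finset.mem_univ, true_and]
  constructor
  · rintro ⟨k, rfl⟩; exact k.2
  · intro hx; exact ⟨⟨x, hx⟩, rfl⟩

lemma sum_fin_castLE {n m : ℕ} (h : n ≤ m) (f : Fin m → ℝ)
    (h0 : ∀ k : Fin m, n ≤ (k : ℕ) → f k = 0) :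
    ∑ k : Fin n, f (Fin.castLE h k) = ∑ k : Fin m, f k := by
  rw [show ∑ k : Fin n, f (Fin.castLE h k) = ∑ x ∈ Finset.univ.map (Fin.castLEEmb h), f x by
    rw [Finset.sum_map]; rfl]
  apply Finset.sum_subset (Finset.subset_univ _)
  intro x _ hx
  exact h0 x (le_of_not_gt (fun hc => hx ((mem_map_castLE h x).mpr hc)))

lemma sum_fin_castLE_le {n m : ℕ} (h : n ≤ m) (f : Fin m → ℝ)
    (h0 : ∀ k : Fin m, 0 ≤ f k) :
    ∑ k : Fin n, f (Fin.castLE h k) ≤ ∑ k : Fin m, f k := by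
  rw [show ∑ k : Fin n, f (Fin.castLE h k) = ∑ x ∈ Finset.univ.map (Fin.castLEEmb h), f x by
    rw [Finset.sum_map]; rfl]
  exact Finset.sum_le_sum_of_subset_of_nonneg (Finset.subset_univ _) (fun x _ _ => h0 x)

end AuxSEMLemma2b

set_option maxHeartbeats 2000000 in
/-- Lemma 2: In a recursive linear Gaussian SEM over standardized
variables with conditional variances bounded below by `J` (NVV(J)), if `X_j` is not an
ancestor of `X_i` (here: `i < j` in the causal order, so that `{X_0, …, X_j}` is an
ancestral set containing `X_i` and `X_j` but no descendant of `X_j`) and `b = B j i` is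
the coefficient of the edge `X_i → X_j`, then
`|b|/√J ≥ |ρ(X_i, X_j | X[0,…,j−1] \ {X_i})| ≥ |b|·√J`. -/
theorem lemma2_parcorr_bounds {m : ℕ}
    (B : Matrix (Fin m) (Fin m) ℝ) (d : Fin m → ℝ)
    (hB : SEM.StrictLower B) (hd : ∀ p, 0 < d p)
    (J : ℝ) (hJ : 0 < J)
    (hstd : ∀ p, SEM.cov B (Matrix.diagonal d) p p = 1)
    (hNVV : ∀ p, J ≤ (((SEM.cov B (Matrix.diagonal d))⁻¹) p p)⁻¹)
    (i j : Fin m) (hij : i < j) :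
    |B j i| / Real.sqrt J ≥
        |SEM.parcorr (SEM.cov B (Matrix.diagonal d)) i j
          (Finset.univ.filter fun p => p < j ∧ p ≠ i)| ∧
      |SEM.parcorr (SEM.cov B (Matrix.diagonal d)) i j
          (Finset.univ.filter fun p => p < j ∧ p ≠ i)| ≥
        |B j i| * Real.sqrt J := by
  classical
  have hijn : (i : ℕ) < (j : ℕ) := hij
  set Dg := Matrix.diagonal d with hDg
  set Sg := SEM.cov B Dg with hSg
  set W := (Finset.univ.filter fun p : Fin m => p < j ∧ p ≠ i) with hW
  -- triangularity facts
  have htri : ∀ p q : Fin m, p < q → (1 - B) p q = 0 := by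
    intro p q h
    simp [Matrix.sub_apply, Matrix.one_apply_ne (Fin.ne_of_lt h), hB p q h.le]
  have hdiag1 : ∀ p : Fin m, (1 - B) p p = 1 := by
    intro p; simp [Matrix.sub_apply, hB p p le_rfl]
  have hlow : (1 - B).BlockTriangular OrderDual.toDual := fun p q hpq => htri p q hpq
  have hdet1 : (1 - B).det = 1 := by
    rw [Matrix.det_of_lowerTriangular _ hlow]
    simp [hdiag1]
  have hU : IsUnit (1 - B).det := by rw [hdet1]; exact isUnit_one
  have hUT : IsUnit ((1 - B)ᵀ).det := by
    rw [Matrix.det_transpose, hdet1]; exact isUnit_one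
  -- full precision matrix
  have hDinv : Dg⁻¹ = Matrix.diagonal (fun k => (d k)⁻¹) := by
    apply Matrix.inv_eq_right_inv
    rw [hDg, Matrix.diagonal_mul_diagonal]
    rw [show (fun k => d k * (d k)⁻¹) = fun _ => (1:ℝ) from funext fun k => by
      simp [mul_inv_cancel₀ (hd k).ne']]
    exact Matrix.diagonal_one
  have hRfull : Sg⁻¹ = (1 - B)ᵀ * Matrix.diagonal (fun k => (d k)⁻¹) * (1 - B) := by
    rw [hSg]
    show ((1 - B)⁻¹ * Dg * ((1 - B)ᵀ)⁻¹)⁻¹ = _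
    rw [Matrix.mul_inv_rev, Matrix.mul_inv_rev, Matrix.nonsing_inv_nonsing_inv _ hUT,
      Matrix.nonsing_inv_nonsing_inv _ hU, hDinv, ← Matrix.mul_assoc]
  have hentry_full : ∀ p q : Fin m,
      Sg⁻¹ p q = ∑ k, (1 - B) k p * (d k)⁻¹ * (1 - B) k q := by
    intro p q; rw [hRfull]; exact tdt_apply _ _ p q
  have hRbound : ∀ p : Fin m, 0 < Sg⁻¹ p p ∧ Sg⁻¹ p p ≤ J⁻¹ := by
    intro p
    have h1 : 0 < (Sg⁻¹ p p)⁻¹ := lt_of_lt_of_le hJ (hNVV p)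
    have h2 : 0 < Sg⁻¹ p p := inv_pos.mp h1
    refine ⟨h2, ?_⟩
    have h3 := inv_anti₀ hJ (hNVV p)
    rwa [inv_inv] at h3
  -- restriction to the ancestral set {0,...,j}
  have hnm : (j : ℕ) + 1 ≤ m := j.2
  set ι : Fin ((j : ℕ) + 1) → Fin m := Fin.castLE hnm with hι
  set K : Matrix (Fin ((j : ℕ) + 1)) (Fin ((j : ℕ) + 1)) ℝ := (1 - B).submatrix ι ι with hK
  set S : Matrix (Fin ((j : ℕ) + 1)) (Fin ((j : ℕ) + 1)) ℝ := Sg.submatrix ι ι with hS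
  set i' : Fin ((j : ℕ) + 1) := ⟨(i : ℕ), by omega⟩ with hi'
  set j' : Fin ((j : ℕ) + 1) := ⟨(j : ℕ), by omega⟩ with hj'
  have hιi : ι i' = i := Fin.ext rfl
  have hιj : ι j' = j := Fin.ext rfl
  have hside : ∀ (p : Fin ((j : ℕ) + 1)) (k : Fin m), (j : ℕ) + 1 ≤ (k : ℕ) →
      (1 - B) (ι p) k = 0 := by
    intro p k hk
    apply htri
    have hp : (ι p : ℕ) = (p : ℕ) := rfl
    have hp2 : (p : ℕ) < (j : ℕ) + 1 := p.2
    exact Fin.lt_def.mpr (by omega)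
  set E : Matrix (Fin ((j : ℕ) + 1)) (Fin ((j : ℕ) + 1)) ℝ :=
    Matrix.diagonal (fun k => d (ι k)) with hE
  have hfull : (1 - B) * Sg * (1 - B)ᵀ = Dg := by
    rw [hSg]
    show (1 - B) * ((1 - B)⁻¹ * Dg * ((1 - B)ᵀ)⁻¹) * (1 - B)ᵀ = Dg
    have h1 : (1 - B) * ((1 - B)⁻¹ * Dg * ((1 - B)ᵀ)⁻¹) = Dg * ((1 - B)ᵀ)⁻¹ := by
      rw [← Matrix.mul_assoc, ← Matrix.mul_assoc, Matrix.mul_nonsing_inv _ hU, Matrix.one_mul]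
    rw [h1, Matrix.nonsing_inv_mul_cancel_right _ _ hUT]
  have hKSK : K * S * Kᵀ = E := by
    ext p q
    have e2 : ∀ l : Fin ((j : ℕ) + 1),
        (∑ k, K p k * S k l) = ((1 - B) * Sg) (ι p) (ι l) := by
      intro l
      rw [Matrix.mul_apply]
      exact sum_fin_castLE hnm (fun k => (1 - B) (ι p) k * Sg k (ι l))
        (fun k hk => by
          show (1 - B) (ι p) k * Sg k (ι l) = 0
          rw [hside p k hk, zero_mul])
    have e1 : (K * S * Kᵀ) p q = ∑ l, ((1 - B) * Sg) (ι p) (ι l) * (1 - B) (ι q) (ι l) := by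
      rw [Matrix.mul_apply]
      refine Finset.sum_congr rfl fun l _ => ?_
      rw [Matrix.mul_apply, Matrix.transpose_apply, e2 l]
      rfl
    have hfull' : ∀ a b : Fin m, ∑ l, ((1 - B) * Sg) a l * (1 - B)ᵀ l b = Dg a b := by
      intro a b; rw [← Matrix.mul_apply, hfull]
    have e3 : (K * S * Kᵀ) p q = Dg (ι p) (ι q) := by
      rw [e1, ← hfull' (ι p) (ι q)]
      exact sum_fin_castLE hnm (fun l => ((1 - B) * Sg) (ι p) l * (1 - B)ᵀ l (ι q))
        (fun l hl => by
          show ((1 - B) * Sg) (ι p) l * (1 - B)ᵀ l (ι q) = 0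
          rw [Matrix.transpose_apply, hside q l hl, mul_zero])
    rw [e3, hDg, hE]
    by_cases hpq : p = q
    · subst hpq; simp [Matrix.diagonal_apply_eq]
    · have : ι p ≠ ι q := fun hc => hpq (Fin.castLE_injective hnm hc)
      rw [Matrix.diagonal_apply_ne _ this, Matrix.diagonal_apply_ne _ hpq]
  have hKtri : K.BlockTriangular OrderDual.toDual := by
    intro p q hpq
    exact htri _ _ (Fin.lt_def.mpr (show (p : ℕ) < (q : ℕ) from hpq))
  have hdetK : K.det = 1 := by
    rw [Matrix.det_of_lowerTriangular _ hKtri]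
    have : ∀ p, K p p = 1 := fun p => hdiag1 (ι p)
    simp [this]
  have hKU : IsUnit K.det := by rw [hdetK]; exact isUnit_one
  have hKTU : IsUnit (Kᵀ).det := by rw [Matrix.det_transpose, hdetK]; exact isUnit_one
  have hSeq : S = K⁻¹ * E * (Kᵀ)⁻¹ := by
    rw [← hKSK, Matrix.mul_assoc K S Kᵀ, Matrix.nonsing_inv_mul_cancel_left _ _ hKU,
      Matrix.mul_nonsing_inv_cancel_right _ _ hKTU]
  have hEinv : E⁻¹ = Matrix.diagonal (fun k => (d (ι k))⁻¹) := by
    apply Matrix.inv_eq_right_inv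
    rw [hE, Matrix.diagonal_mul_diagonal]
    rw [show (fun k => d (ι k) * (d (ι k))⁻¹) = fun _ => (1 : ℝ) from funext fun k => by
      simp [mul_inv_cancel₀ (hd (ι k)).ne']]
    exact Matrix.diagonal_one
  have hSinv : S⁻¹ = Kᵀ * Matrix.diagonal (fun k => (d (ι k))⁻¹) * K := by
    rw [hSeq, Matrix.mul_inv_rev, Matrix.mul_inv_rev, Matrix.nonsing_inv_nonsing_inv _ hKTU,
      Matrix.nonsing_inv_nonsing_inv _ hKU, hEinv, ← Matrix.mul_assoc]
  have hentry : ∀ p q, S⁻¹ p q = ∑ k, K k p * (d (ι k))⁻¹ * K k q := by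
    intro p q; rw [hSinv]; exact tdt_apply _ _ p q
  have hEinvPD : (Matrix.diagonal (fun k => (d (ι k))⁻¹)).PosDef :=
    Matrix.posDef_diagonal_iff.mpr fun k => inv_pos.mpr (hd (ι k))
  have hSinvPD : (S⁻¹).PosDef := by rw [hSinv]; exact posDef_conj hEinvPD hKU
  have hSPD : S.PosDef := Matrix.posDef_inv_iff.mp hSinvPD
  -- diagonal entries of S are 1
  have hSii : S i' i' = 1 := by rw [hS, Matrix.submatrix_apply, hιi]; exact hstd i
  have hSjj : S j' j' = 1 := by rw [hS, Matrix.submatrix_apply, hιj]; exact hstd j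
  -- Cauchy–Schwarz lower bounds
  have hCSi := one_le_diag_mul_inv_diag hSPD i'
  have hCSj := one_le_diag_mul_inv_diag hSPD j'
  have h1r : 1 ≤ S⁻¹ i' i' := by have := hCSi.2; rwa [hSii, one_mul] at this
  have h1t : 1 ≤ S⁻¹ j' j' := by have := hCSj.2; rwa [hSjj, one_mul] at this
  -- comparison with the full precision matrix
  have hcompare : ∀ p : Fin m, ∀ p' : Fin ((j : ℕ) + 1), ι p' = p →
      S⁻¹ p' p' ≤ Sg⁻¹ p p := by
    intro p p' hpp
    rw [hentry p' p', hentry_full p p]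
    have hterm : ∀ k : Fin ((j : ℕ) + 1), K k p' * (d (ι k))⁻¹ * K k p'
        = (fun k : Fin m => (1 - B) k p * (d k)⁻¹ * (1 - B) k p) (ι k) := by
      intro k
      show (1 - B) (ι k) (ι p') * (d (ι k))⁻¹ * (1 - B) (ι k) (ι p') = _
      rw [hpp]
    rw [show (∑ k, K k p' * (d (ι k))⁻¹ * K k p')
        = ∑ k, (fun k : Fin m => (1 - B) k p * (d k)⁻¹ * (1 - B) k p) (ι k) from
      Finset.sum_congr rfl fun k _ => hterm k]
    exact sum_fin_castLE_le hnm (fun k : Fin m => (1 - B) k p * (d k)⁻¹ * (1 - B) k p)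
      (fun k => by
        have h1 : (0:ℝ) ≤ (1 - B) k p * (1 - B) k p := mul_self_nonneg _
        have h2 : (0:ℝ) ≤ (d k)⁻¹ := (inv_pos.mpr (hd k)).le
        nlinarith [mul_nonneg h1 h2])
  have hrle : S⁻¹ i' i' ≤ J⁻¹ := le_trans (hcompare i i' hιi) (hRbound i).2
  have htle : S⁻¹ j' j' ≤ J⁻¹ := le_trans (hcompare j j' hιj) (hRbound j).2
  -- entries of the restricted precision matrix in row/column j'
  have hcol : ∀ k : Fin ((j : ℕ) + 1), K k j' = if k = j' then 1 else 0 := by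
    intro k
    by_cases hk : k = j'
    · subst hk
      show (1 - B) (ι j') (ι j') = _
      rw [hιj, hdiag1, if_pos rfl]
    · rw [if_neg hk]
      show (1 - B) (ι k) (ι j') = 0
      rw [hιj]
      have hne : ι k ≠ j := fun hc => hk (by
        apply Fin.ext
        have : (ι k : ℕ) = (j : ℕ) := congrArg Fin.val hc
        exact this)
      have hle : (ι k : ℕ) ≤ (j : ℕ) := by
        have := k.2
        show (k : ℕ) ≤ (j : ℕ)
        omega
      simp [Matrix.sub_apply, Matrix.one_apply_ne hne, hB (ι k) j (Fin.le_def.mpr hle)]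
  have hKji : K j' i' = -(B j i) := by
    show (1 - B) (ι j') (ι i') = _
    rw [hιj, hιi]
    simp [Matrix.sub_apply, Matrix.one_apply_ne (Fin.ne_of_lt hij).symm]
  have hKjj : K j' j' = 1 := by
    show (1 - B) (ι j') (ι j') = 1
    rw [hιj]; exact hdiag1 j
  have hsum_col : ∀ g : Fin ((j : ℕ) + 1) → ℝ, (∑ k, g k * K k j') = g j' := by
    intro g
    have hterm : ∀ k, g k * K k j' = if k = j' then g k else 0 := by
      intro k; rw [hcol k]; split <;> simp
    rw [Finset.sum_congr rfl fun k _ => hterm k, Finset.sum_ite_eq' Finset.univ j' g]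
    simp
  have hSij' : S⁻¹ i' j' = -(B j i) * (d j)⁻¹ := by
    have h0 : S⁻¹ i' j' = K j' i' * (d (ι j'))⁻¹ := by
      rw [hentry i' j']
      exact hsum_col (fun k => K k i' * (d (ι k))⁻¹)
    rw [h0, hιj, hKji]
  have hSjj' : S⁻¹ j' j' = (d j)⁻¹ := by
    have h0 : S⁻¹ j' j' = K j' j' * (d (ι j'))⁻¹ := by
      rw [hentry j' j']
      exact hsum_col (fun k => K k j' * (d (ι k))⁻¹)
    rw [h0, hιj, hKjj, one_mul]
  have hSji' : S⁻¹ j' i' = -(B j i) * (d j)⁻¹ := by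
    have h1 : (S⁻¹)ᴴ j' i' = S⁻¹ j' i' := by rw [hSinvPD.1]
    rw [← h1, Matrix.conjTranspose_apply, star_trivial, hSij']
  -- bounds on t = d j
  have htJ : J ≤ d j := by
    have h1 : (d j)⁻¹ ≤ J⁻¹ := by rw [← hSjj']; exact htle
    have := inv_anti₀ (inv_pos.mpr (hd j)) h1
    rwa [inv_inv, inv_inv] at this
  have ht1 : d j ≤ 1 := by
    have h1 : 1 ≤ (d j)⁻¹ := by rw [← hSjj']; exact h1t
    have h2 := mul_le_mul_of_nonneg_left h1 (hd j).le
    rwa [mul_one, mul_inv_cancel₀ (hd j).ne'] at h2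
  -- the index bijection
  have hmemW : ∀ w : Fin m, w ∈ W ↔ (w < j ∧ w ≠ i) := by
    intro w; rw [hW]; simp
  have hWlt : ∀ w : {x // x ∈ W}, (w.1 : ℕ) < (j : ℕ) + 1 := by
    intro w
    have h1 : w.1 < j := ((hmemW w.1).mp w.2).1
    have : (w.1 : ℕ) < (j : ℕ) := h1
    omega
  set f : Fin 2 ⊕ {x // x ∈ W} → Fin ((j : ℕ) + 1) :=
    Sum.elim ![i', j'] (fun w => ⟨(w.1 : ℕ), hWlt w⟩) with hf
  have hf0 : f (Sum.inl 0) = i' := rfl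
  have hf1 : f (Sum.inl 1) = j' := rfl
  have hinj : Function.Injective f := by
    rintro (a | w) (b | v) h
    · have hv := congrArg Fin.val h
      fin_cases a <;> fin_cases b
      · rfl
      · exact absurd (show (i : ℕ) = (j : ℕ) from hv) (by omega)
      · exact absurd (show (j : ℕ) = (i : ℕ) from hv) (by omega)
      · rfl
    · exfalso
      have hv := congrArg Fin.val h
      have hv1 : (v.1 : ℕ) < (j : ℕ) := ((hmemW v.1).mp v.2).1
      have hv2 : (v.1 : ℕ) ≠ (i : ℕ) := fun hc => ((hmemW v.1).mp v.2).2 (Fin.ext hc)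
      fin_cases a
      · exact hv2 (show (i : ℕ) = (v.1 : ℕ) from hv).symm
      · exact absurd (show (j : ℕ) = (v.1 : ℕ) from hv) (by omega)
    · exfalso
      have hv := congrArg Fin.val h
      have hv1 : (w.1 : ℕ) < (j : ℕ) := ((hmemW w.1).mp w.2).1
      have hv2 : (w.1 : ℕ) ≠ (i : ℕ) := fun hc => ((hmemW w.1).mp w.2).2 (Fin.ext hc)
      fin_cases b
      · exact hv2 (show (w.1 : ℕ) = (i : ℕ) from hv)
      · exact absurd (show (w.1 : ℕ) = (j : ℕ) from hv) (by omega)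
    · have hval := congrArg Fin.val h
      exact congrArg Sum.inr (Subtype.ext (Fin.ext (show ((w.1 : Fin m) : ℕ) = ((v.1 : Fin m) : ℕ) from hval)))
  have hsurj : Function.Surjective f := by
    intro q
    by_cases hqi : (q : ℕ) = (i : ℕ)
    · exact ⟨Sum.inl 0, Fin.ext (show (i : ℕ) = (q : ℕ) from hqi.symm)⟩
    · by_cases hqj : (q : ℕ) = (j : ℕ)
      · exact ⟨Sum.inl 1, Fin.ext (show (j : ℕ) = (q : ℕ) from hqj.symm)⟩
      · have hq2 : (q : ℕ) < (j : ℕ) + 1 := q.2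
        have hmem : ι q ∈ W := by
          rw [hmemW (ι q)]
          constructor
          · exact Fin.lt_def.mpr (by show (q : ℕ) < (j : ℕ); omega)
          · exact fun hc => hqi (congrArg Fin.val hc)
        exact ⟨Sum.inr ⟨ι q, hmem⟩, Fin.ext rfl⟩
  set g : (Fin 2 ⊕ {x // x ∈ W}) ≃ Fin ((j : ℕ) + 1) := Equiv.ofBijective f ⟨hinj, hsurj⟩ with hg
  have hgf : ⇑g = f := rfl
  set M : Matrix (Fin 2 ⊕ {x // x ∈ W}) (Fin 2 ⊕ {x // x ∈ W}) ℝ := S.submatrix f f with hM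
  have hMPD : M.PosDef := posDef_submatrix_of_injective hSPD hinj
  have hMinv : M⁻¹ = S⁻¹.submatrix f f := by
    rw [hM, ← hgf, Matrix.inv_submatrix_equiv S g g, hgf]
  -- identification of condCov with the Schur complement of M
  have hcomp : ι ∘ f = Sum.elim ![i, j] (Subtype.val : {x // x ∈ W} → Fin m) := by
    funext x
    rcases x with a | w
    · fin_cases a
      · exact hιi
      · exact hιj
    · exact Fin.ext rfl
  have hMeq : M = Sg.submatrix (Sum.elim ![i, j] (Subtype.val : {x // x ∈ W} → Fin m))
      (Sum.elim ![i, j] (Subtype.val : {x // x ∈ W} → Fin m)) := by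
    rw [hM, hS, Matrix.submatrix_submatrix, hcomp]
  have b11 : M.toBlocks₁₁ = Sg.submatrix ![i, j] ![i, j] := by
    rw [hMeq]; ext a b; rfl
  have b12 : M.toBlocks₁₂ = Sg.submatrix ![i, j] (Subtype.val : {x // x ∈ W} → Fin m) := by
    rw [hMeq]; ext a b; rfl
  have b21 : M.toBlocks₂₁ = Sg.submatrix (Subtype.val : {x // x ∈ W} → Fin m) ![i, j] := by
    rw [hMeq]; ext a b; rfl
  have b22 : M.toBlocks₂₂ = Sg.submatrix (Subtype.val : {x // x ∈ W} → Fin m)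
      (Subtype.val : {x // x ∈ W} → Fin m) := by
    rw [hMeq]; ext a b; rfl
  have hcond : SEM.condCov Sg i j W = ((M⁻¹).toBlocks₁₁)⁻¹ := by
    rw [← schur_complement_eq_inv_block hMPD, b11, b12, b21, b22]
    rfl
  -- explicit 2×2 computation
  set b := B j i with hbdef
  set t := d j with htdef
  set r := S⁻¹ i' i' with hrdef
  have hQ : (M⁻¹).toBlocks₁₁ = !![r, -(b * t⁻¹); -(b * t⁻¹), t⁻¹] := by
    ext a c
    fin_cases a <;> fin_cases c
    · show M⁻¹ (Sum.inl 0) (Sum.inl 0) = r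
      rw [hMinv]
      show S⁻¹ i' i' = r
      rw [hrdef]
    · show M⁻¹ (Sum.inl 0) (Sum.inl 1) = -(b * t⁻¹)
      rw [hMinv]
      show S⁻¹ i' j' = -(b * t⁻¹)
      rw [hSij']; ring
    · show M⁻¹ (Sum.inl 1) (Sum.inl 0) = -(b * t⁻¹)
      rw [hMinv]
      show S⁻¹ j' i' = -(b * t⁻¹)
      rw [hSji']; ring
    · show M⁻¹ (Sum.inl 1) (Sum.inl 1) = t⁻¹
      rw [hMinv]
      show S⁻¹ j' j' = t⁻¹
      rw [hSjj']
  have hQPD : ((M⁻¹).toBlocks₁₁).PosDef := by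
    have h1 : (M⁻¹).toBlocks₁₁ = (M⁻¹).submatrix Sum.inl Sum.inl := by ext a c; rfl
    rw [h1]; exact posDef_submatrix_of_injective hMPD.inv Sum.inl_injective
  set Δ : ℝ := r * t⁻¹ - (b * t⁻¹) * (b * t⁻¹) with hΔdef
  have hdet2 : Matrix.det !![r, -(b * t⁻¹); -(b * t⁻¹), t⁻¹] = Δ := by
    rw [Matrix.det_fin_two_of, hΔdef]; ring
  have hΔpos : 0 < Δ := by
    have h2 := hQPD.det_pos
    rwa [hQ, hdet2] at h2
  have hcondinv : SEM.condCov Sg i j W = Δ⁻¹ • !![t⁻¹, b * t⁻¹; b * t⁻¹, r] := by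
    rw [hcond, hQ, Matrix.inv_def, hdet2, Matrix.adjugate_fin_two_of, Ring.inverse_eq_inv]
    congr 1
    ext a c
    fin_cases a <;> fin_cases c <;> simp
  have hC00 : SEM.condCov Sg i j W 0 0 = Δ⁻¹ * t⁻¹ := by
    rw [hcondinv]; simp
  have hC01 : SEM.condCov Sg i j W 0 1 = Δ⁻¹ * (b * t⁻¹) := by
    rw [hcondinv]; simp
  have hC11 : SEM.condCov Sg i j W 1 1 = Δ⁻¹ * r := by
    rw [hcondinv]; simp
  have hrpos : 0 < r := lt_of_lt_of_le one_pos h1r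
  have htpos : 0 < t := hd j
  have hrt : 0 < r * t := mul_pos hrpos htpos
  have hsqrt_rt : 0 < Real.sqrt (r * t) := Real.sqrt_pos.mpr hrt
  have hCprod : SEM.condCov Sg i j W 0 0 * SEM.condCov Sg i j W 1 1
      = (Δ⁻¹ * (Real.sqrt (r * t) / t)) ^ 2 := by
    rw [hC00, hC11, mul_pow, div_pow, Real.sq_sqrt hrt.le]
    field_simp
  have hden : Real.sqrt (SEM.condCov Sg i j W 0 0 * SEM.condCov Sg i j W 1 1)
      = Δ⁻¹ * (Real.sqrt (r * t) / t) := by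
    rw [hCprod, Real.sqrt_sq (by positivity)]
  have hpc : SEM.parcorr Sg i j W = b / Real.sqrt (r * t) := by
    unfold SEM.parcorr
    rw [hden, hC01]
    rw [div_eq_div_iff (by positivity) (by positivity)]
    field_simp
  have habs : |SEM.parcorr Sg i j W| = |b| / Real.sqrt (r * t) := by
    rw [hpc, abs_div, abs_of_nonneg (Real.sqrt_nonneg _)]
  have hJrt : J ≤ r * t := by nlinarith [h1r, htJ, hJ, htpos]
  have hrtJ : r * t ≤ J⁻¹ := by nlinarith [hrle, ht1, hrpos, h1r]
  constructor
  · rw [ge_iff_le, habs]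
    exact div_le_div_of_nonneg_left (abs_nonneg b) (Real.sqrt_pos.mpr hJ)
      (Real.sqrt_le_sqrt hJrt)
  · rw [ge_iff_le, habs]
    have h1 : Real.sqrt (r * t) ≤ (Real.sqrt J)⁻¹ := by
      rw [← Real.sqrt_inv]
      exact Real.sqrt_le_sqrt hrtJ
    have h2 : |b| / (Real.sqrt J)⁻¹ ≤ |b| / Real.sqrt (r * t) :=
      div_le_div_of_nonneg_left (abs_nonneg _) hsqrt_rt h1
    calc |b| * Real.sqrt J = |b| / (Real.sqrt J)⁻¹ := by
          rw [div_inv_eq_mul]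

      _ ≤ _ := h2
end

section
/- Under the k-Triangle-Faithfulness assumption with k > 0, NVV(J), and the true model M: if (X, Y, Z) is a shielded collider in G_M (a triangle with X → Y ← Z) and W is any conditioning set containing Y with |ρ_M(X, Z | W)| < δ, then for any ancestral conditioning set U containing neither Y nor any descendant of Z (where without loss of generality Z is not an ancestor of X), |ρ_M(X, Z | U) − ρ_M(X, Z | W)| < δ(1 + J^{-1/2}/k). -/
open Matrix

namespace SEMAux

open Matrix Finset

variable {m : ℕ}

/-! ### Nilpotency of strictly lower triangular matrices -/

lemma pow_apply_ne_zero {B : Matrix (Fin m) (Fin m) ℝ} (hB : SEM.StrictLower B) :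
    ∀ (k : ℕ) (p q : Fin m), (B ^ k) p q ≠ 0 → (q : ℕ) + k ≤ (p : ℕ) := by
  intro k
  induction k with
  | zero =>
    intro p q h
    simp only [pow_zero] at h
    by_cases hpq : p = q
    · subst hpq; simp
    · exact absurd (Matrix.one_apply_ne hpq) h
  | succ k ih =>
    intro p q h
    rw [pow_succ, Matrix.mul_apply] at h
    obtain ⟨r, _, hr⟩ := Finset.exists_ne_zero_of_sum_ne_zero h
    have h1 : (B ^ k) p r ≠ 0 := fun h0 => hr (by rw [h0, zero_mul])
    have h2 : B r q ≠ 0 := fun h0 => hr (by rw [h0, mul_zero])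
    have hqr : (q : ℕ) < (r : ℕ) := by
      by_contra hle
      exact h2 (hB r q (Fin.le_def.mpr (by omega)))
    have := ih p r h1
    omega

lemma pow_card_eq_zero {B : Matrix (Fin m) (Fin m) ℝ} (hB : SEM.StrictLower B) :
    B ^ m = 0 := by
  ext p q
  by_contra h
  have := pow_apply_ne_zero hB m p q h
  have := p.isLt
  omega

lemma one_sub_mul_geom {B : Matrix (Fin m) (Fin m) ℝ} (hB : SEM.StrictLower B) :
    (1 - B) * (∑ i ∈ Finset.range m, B ^ i) = 1 := by
  have h := mul_geom_sum B m
  rw [pow_card_eq_zero hB] at h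
  have h2 : (1 - B) * ∑ i ∈ Finset.range m, B ^ i
      = -((B - 1) * ∑ i ∈ Finset.range m, B ^ i) := by
    rw [← neg_mul, neg_sub]
  rw [h2, h]
  simp

/-! ### Descendants -/

lemma desc_of_pow {B : Matrix (Fin m) (Fin m) ℝ} :
    ∀ (k : ℕ) (q z : Fin m), (B ^ k) q z ≠ 0 → SEM.Desc B z q := by
  intro k
  induction k with
  | zero =>
    intro q z h
    rw [pow_zero] at h
    by_cases hqz : q = z
    · subst hqz; exact Relation.ReflTransGen.refl
    · exact absurd (Matrix.one_apply_ne hqz) h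
  | succ k ih =>
    intro q z h
    rw [pow_succ', Matrix.mul_apply] at h
    obtain ⟨r, _, hr⟩ := Finset.exists_ne_zero_of_sum_ne_zero h
    have h1 : B q r ≠ 0 := fun h0 => hr (by rw [h0, zero_mul])
    have h2 : (B ^ k) r z ≠ 0 := fun h0 => hr (by rw [h0, mul_zero])
    exact (ih r z h2).tail h1

lemma desc_le {B : Matrix (Fin m) (Fin m) ℝ} (hB : SEM.StrictLower B) {p q : Fin m}
    (h : SEM.Desc B p q) : p ≤ q := by
  induction h with
  | refl => exact le_refl _
  | tail _ e ih =>
    rename_i b c _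
    have hbc : b < c := by
      by_contra hle
      exact e (hB c b (not_lt.mp hle))
    exact le_trans ih hbc.le

lemma inv_one_sub_apply_eq_zero {B : Matrix (Fin m) (Fin m) ℝ} (hB : SEM.StrictLower B)
    {q z : Fin m} (h : ¬ SEM.Desc B z q) : (1 - B)⁻¹ q z = 0 := by
  rw [Matrix.inv_eq_right_inv (one_sub_mul_geom hB)]
  rw [Matrix.sum_apply]
  apply Finset.sum_eq_zero
  intro k _
  by_contra h0
  exact h (desc_of_pow k q z h0)

/-! ### Cauchy–Schwarz for a PSD quadratic form -/

lemma quad_cs (S : Matrix (Fin m) (Fin m) ℝ)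
    (hswap : ∀ u v : Fin m → ℝ, u ⬝ᵥ S *ᵥ v = v ⬝ᵥ S *ᵥ u)
    (hpsd : ∀ v : Fin m → ℝ, 0 ≤ v ⬝ᵥ S *ᵥ v) (u v : Fin m → ℝ) :
    (u ⬝ᵥ S *ᵥ v) ^ 2 ≤ (u ⬝ᵥ S *ᵥ u) * (v ⬝ᵥ S *ᵥ v) := by
  have key : ∀ t : ℝ, 0 ≤ (v ⬝ᵥ S *ᵥ v) * (t * t) + (2 * (u ⬝ᵥ S *ᵥ v)) * t
      + (u ⬝ᵥ S *ᵥ u) := by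
    intro t
    have h0 := hpsd (u + t • v)
    have hexp : (u + t • v) ⬝ᵥ S *ᵥ (u + t • v)
        = (v ⬝ᵥ S *ᵥ v) * (t * t) + (2 * (u ⬝ᵥ S *ᵥ v)) * t + (u ⬝ᵥ S *ᵥ u) := by
      rw [Matrix.mulVec_add, Matrix.mulVec_smul]
      simp only [dotProduct_add, add_dotProduct, dotProduct_smul, smul_dotProduct,
        smul_eq_mul]
      rw [show v ⬝ᵥ S *ᵥ u = u ⬝ᵥ S *ᵥ v from hswap v u]
      ring
    linarith [hexp ▸ h0]
  have hd := discrim_le_zero key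
  rw [discrim] at hd
  nlinarith

/-! ### Vectors associated to conditioning on a set `U` -/

def indv (t : Fin m) : Fin m → ℝ := fun p => if p = t then 1 else 0

lemma dot_indv (t : Fin m) (g : Fin m → ℝ) : indv t ⬝ᵥ g = g t := by
  simp [indv, dotProduct, ite_mul]

lemma mulVec_indv (M : Matrix (Fin m) (Fin m) ℝ) (t p : Fin m) :
    (M *ᵥ indv t) p = M p t := by
  simp [indv, Matrix.mulVec, dotProduct, mul_ite]

lemma dot_restrict (U : Finset (Fin m)) (y g : Fin m → ℝ)
    (hy : ∀ p, p ∉ U → y p = 0) :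
    y ⬝ᵥ g = ∑ u : {p // p ∈ U}, y u.1 * g u.1 := by
  rw [← Finset.sum_subtype U (fun _ => Iff.rfl) (fun p => y p * g p)]
  exact (Finset.sum_subset (Finset.subset_univ U)
    (fun p _ hp => by rw [hy p hp, zero_mul])).symm

lemma dot_supp_vanish (U : Finset (Fin m)) (c g : Fin m → ℝ)
    (hc : ∀ p, p ∉ U → c p = 0) (hg : ∀ p ∈ U, g p = 0) : c ⬝ᵥ g = 0 := by
  apply Finset.sum_eq_zero
  intro p _
  by_cases hp : p ∈ U
  · rw [hg p hp, mul_zero]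
  · rw [hc p hp, zero_mul]

noncomputable def avec (S : Matrix (Fin m) (Fin m) ℝ) (U : Finset (Fin m)) (t : Fin m) :
    Fin m → ℝ := fun p =>
  if h : p ∈ U then
    ((S.submatrix (Subtype.val : {x // x ∈ U} → Fin m)
        (Subtype.val : {x // x ∈ U} → Fin m))⁻¹ *ᵥ fun u => S u.1 t) ⟨p, h⟩
  else 0

noncomputable def vvec (S : Matrix (Fin m) (Fin m) ℝ) (U : Finset (Fin m)) (t : Fin m) :
    Fin m → ℝ := indv t - avec S U t

lemma avec_supp (S : Matrix (Fin m) (Fin m) ℝ) (U : Finset (Fin m)) (t : Fin m) :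
    ∀ p, p ∉ U → avec S U t p = 0 :=
  fun _ hp => dif_neg hp

lemma mulVec_avec (S : Matrix (Fin m) (Fin m) ℝ) (U : Finset (Fin m)) (t : Fin m)
    (p : Fin m) :
    (S *ᵥ avec S U t) p
      = ∑ u : {x // x ∈ U}, S p u.1 *
        ((S.submatrix (Subtype.val : {x // x ∈ U} → Fin m)
          (Subtype.val : {x // x ∈ U} → Fin m))⁻¹ *ᵥ fun u => S u.1 t) u := by
  show (fun q => S p q) ⬝ᵥ avec S U t = _
  rw [dotProduct_comm, dot_restrict U _ _ (avec_supp S U t)]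
  refine Finset.sum_congr rfl fun u _ => ?_
  rw [avec, dif_pos u.2, mul_comm]

lemma mulVec_vvec_vanish (S : Matrix (Fin m) (Fin m) ℝ) (U : Finset (Fin m))
    (hdet : IsUnit (S.submatrix (Subtype.val : {x // x ∈ U} → Fin m)
      (Subtype.val : {x // x ∈ U} → Fin m)).det)
    (t : Fin m) : ∀ p ∈ U, (S *ᵥ vvec S U t) p = 0 := by
  intro p hp
  rw [vvec, Matrix.mulVec_sub, Pi.sub_apply, mulVec_indv, mulVec_avec]
  have h1 : ∑ u : {x // x ∈ U}, S p u.1 *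
      ((S.submatrix (Subtype.val : {x // x ∈ U} → Fin m)
        (Subtype.val : {x // x ∈ U} → Fin m))⁻¹ *ᵥ fun u => S u.1 t) u
      = ((S.submatrix (Subtype.val : {x // x ∈ U} → Fin m)
          (Subtype.val : {x // x ∈ U} → Fin m)) *ᵥ
        ((S.submatrix (Subtype.val : {x // x ∈ U} → Fin m)
          (Subtype.val : {x // x ∈ U} → Fin m))⁻¹ *ᵥ fun u => S u.1 t)) ⟨p, hp⟩ := by
    rfl
  rw [h1, Matrix.mulVec_mulVec, Matrix.mul_nonsing_inv _ hdet, Matrix.one_mulVec]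
  ring

lemma dot_vvec (S : Matrix (Fin m) (Fin m) ℝ) (U : Finset (Fin m)) (t : Fin m)
    (g : Fin m → ℝ) (hg : ∀ p ∈ U, g p = 0) : vvec S U t ⬝ᵥ g = g t := by
  have h1 : vvec S U t ⬝ᵥ g = indv t ⬝ᵥ g := by
    apply Finset.sum_congr rfl
    intro p _
    by_cases hp : p ∈ U
    · rw [hg p hp, mul_zero, mul_zero]
    · rw [vvec, Pi.sub_apply, avec_supp S U t p hp, sub_zero]
  rw [h1, dot_indv]

lemma condCov_eq_mulVec_vvec (S : Matrix (Fin m) (Fin m) ℝ) (x z : Fin m)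
    (U : Finset (Fin m)) (a b : Fin 2) :
    SEM.condCov S x z U a b = (S *ᵥ vvec S U (![x, z] b)) (![x, z] a) := by
  rw [vvec, Matrix.mulVec_sub, Pi.sub_apply, mulVec_indv, mulVec_avec]
  rw [SEM.condCov]
  simp only [Matrix.sub_apply, Matrix.submatrix_apply]
  congr 1
  simp only [Matrix.mul_apply, Matrix.mulVec, dotProduct, Matrix.submatrix_apply,
    Finset.sum_mul, Finset.mul_sum]
  rw [Finset.sum_comm]
  apply Finset.sum_congr rfl
  intro u _
  apply Finset.sum_congr rfl
  intro u' _
  ring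

end SEMAux

namespace SEMAux

open Matrix Finset

/-- Lemma 2: for an ancestral conditioning set `U` avoiding descendants of `z`,
`|ρ(x,z|U)| ≤ J^{-1/2} |B z x|`. -/
lemma parcorr_anc_bound {m : ℕ} (B : Matrix (Fin m) (Fin m) ℝ) (d : Fin m → ℝ)
    (hB : SEM.StrictLower B) (hd : ∀ p, 0 < d p) (J : ℝ) (hJ : 0 < J)
    (hstd : ∀ p, SEM.cov B (Matrix.diagonal d) p p = 1)
    (hNVV : ∀ p, J ≤ (((SEM.cov B (Matrix.diagonal d))⁻¹) p p)⁻¹)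
    (x z : Fin m) (hxz : x < z)
    (U : Finset (Fin m)) (hxU : x ∉ U) (hzU : z ∉ U)
    (hanc : SEM.Ancestral B (U ∪ {x, z}))
    (hnodesc : ∀ p ∈ U, ¬ SEM.Desc B z p) :
    |SEM.parcorr (SEM.cov B (Matrix.diagonal d)) x z U| ≤ |B z x| / Real.sqrt J := by
  classical
  set S : Matrix (Fin m) (Fin m) ℝ := SEM.cov B (Matrix.diagonal d) with hSdef
  set A : Matrix (Fin m) (Fin m) ℝ := (1 - B)⁻¹ with hAdef
  -- invertibility of 1 - B
  have hgeom := one_sub_mul_geom hB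
  have hudet : IsUnit (1 - B).det := Matrix.isUnit_det_of_right_inverse hgeom
  have hA2 : A * (1 - B) = 1 := Matrix.nonsing_inv_mul _ hudet
  have hSfac : S = A * Matrix.diagonal d * Aᵀ := by
    rw [hSdef, SEM.cov, ← Matrix.transpose_nonsing_inv, ← hAdef]
  have hsym : Sᵀ = S := by
    rw [hSfac, Matrix.transpose_mul, Matrix.transpose_mul, Matrix.transpose_transpose,
      Matrix.diagonal_transpose, Matrix.mul_assoc]
  -- the quadratic form
  have hswap : ∀ u v : Fin m → ℝ, u ⬝ᵥ S *ᵥ v = v ⬝ᵥ S *ᵥ u := by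
    intro u v
    rw [Matrix.dotProduct_mulVec, ← Matrix.mulVec_transpose, hsym, dotProduct_comm]
  have hquad : ∀ v : Fin m → ℝ, v ⬝ᵥ S *ᵥ v = ∑ p, d p * ((Aᵀ *ᵥ v) p) ^ 2 := by
    intro v
    rw [hSfac, ← Matrix.mulVec_mulVec, ← Matrix.mulVec_mulVec,
      Matrix.dotProduct_mulVec, ← Matrix.mulVec_transpose]
    simp only [dotProduct, Matrix.mulVec_diagonal]
    exact Finset.sum_congr rfl fun p _ => by ring
  have hpsd : ∀ v : Fin m → ℝ, 0 ≤ v ⬝ᵥ S *ᵥ v := by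
    intro v
    rw [hquad]
    exact Finset.sum_nonneg fun p _ => mul_nonneg (hd p).le (sq_nonneg _)
  have hAker : ∀ v : Fin m → ℝ, Aᵀ *ᵥ v = 0 → v = 0 := by
    intro v hv
    have h1 : (1 - B)ᵀ *ᵥ (Aᵀ *ᵥ v) = v := by
      rw [Matrix.mulVec_mulVec, ← Matrix.transpose_mul, hA2, Matrix.transpose_one,
        Matrix.one_mulVec]
    rw [hv, Matrix.mulVec_zero] at h1
    exact h1.symm
  have hpos : ∀ v : Fin m → ℝ, v ≠ 0 → 0 < v ⬝ᵥ S *ᵥ v := by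
    intro v hv
    rw [hquad]
    have hw : Aᵀ *ᵥ v ≠ 0 := fun h => hv (hAker v h)
    obtain ⟨p, hp⟩ : ∃ p, (Aᵀ *ᵥ v) p ≠ 0 := by
      by_contra h
      push_neg at h
      exact hw (funext h)
    refine Finset.sum_pos' (fun q _ => mul_nonneg (hd q).le (sq_nonneg _)) ⟨p, mem_univ p, ?_⟩
    exact mul_pos (hd p) (by positivity)
  -- S is invertible
  have hSdet : IsUnit S.det := by
    rw [isUnit_iff_ne_zero]
    intro h0
    obtain ⟨v, hv0, hv⟩ := (Matrix.exists_mulVec_eq_zero_iff).mpr h0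
    have := hpos v hv0
    rw [hv, dotProduct_zero] at this
    exact lt_irrefl _ this
  have hSinv : S * S⁻¹ = 1 := Matrix.mul_nonsing_inv _ hSdet
  -- the submatrix over U is invertible
  have hSUdet : IsUnit (S.submatrix (Subtype.val : {p // p ∈ U} → Fin m)
      (Subtype.val : {p // p ∈ U} → Fin m)).det := by
    rw [isUnit_iff_ne_zero]
    intro h0
    obtain ⟨xv, hxv0, hxv⟩ := (Matrix.exists_mulVec_eq_zero_iff).mpr h0
    set y : Fin m → ℝ := fun p => if h : p ∈ U then xv ⟨p, h⟩ else 0 with hydef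
    have hysupp : ∀ p, p ∉ U → y p = 0 := fun p hp => dif_neg hp
    have hyval : ∀ u : {p // p ∈ U}, y u.1 = xv u := fun u => dif_pos u.2
    have hy0 : y ≠ 0 := by
      intro h
      apply hxv0
      funext u
      have h2 := congrFun h u.1
      rw [hyval u] at h2
      exact h2
    have hSy : ∀ p ∈ U, (S *ᵥ y) p = 0 := by
      intro p hp
      have h1 : (S *ᵥ y) p = ∑ u : {q // q ∈ U}, S p u.1 * xv u := by
        show (fun q => S p q) ⬝ᵥ y = _
        rw [dotProduct_comm, dot_restrict U _ _ hysupp]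
        exact Finset.sum_congr rfl fun u _ => by rw [hyval u, mul_comm]
      rw [h1]
      have h2 := congrFun hxv ⟨p, hp⟩
      simpa [Matrix.mulVec, dotProduct, Matrix.submatrix_apply] using h2
    have hq : y ⬝ᵥ S *ᵥ y = 0 := by
      rw [dot_restrict U _ _ hysupp]
      exact Finset.sum_eq_zero fun u _ => by rw [hSy u.1 u.2, mul_zero]
    exact (ne_of_gt (hpos y hy0)) hq
  -- the residual vectors and conditional covariances
  have hwU : ∀ t : Fin m, ∀ p ∈ U, (S *ᵥ vvec S U t) p = 0 :=
    mulVec_vvec_vanish S U hSUdet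
  have hcond : ∀ a b : Fin 2,
      SEM.condCov S x z U a b = (S *ᵥ vvec S U (![x, z] b)) (![x, z] a) :=
    condCov_eq_mulVec_vvec S x z U
  set Vx : ℝ := (S *ᵥ vvec S U x) x with hVxdef
  set Vz : ℝ := (S *ᵥ vvec S U z) z with hVzdef
  set Cxz : ℝ := (S *ᵥ vvec S U z) x with hCxzdef
  -- quadratic-form expressions
  have hVxq : Vx = vvec S U x ⬝ᵥ S *ᵥ vvec S U x :=
    (dot_vvec S U x _ (hwU x)).symm
  have hVzq : Vz = vvec S U z ⬝ᵥ S *ᵥ vvec S U z :=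
    (dot_vvec S U z _ (hwU z)).symm
  have hVx0 : 0 ≤ Vx := hVxq ▸ hpsd _
  have hVz0 : 0 ≤ Vz := hVzq ▸ hpsd _
  -- Var(x | U) ≤ 1
  have hVx1 : Vx ≤ 1 := by
    have hq0 : 0 ≤ avec S U x ⬝ᵥ S *ᵥ avec S U x := hpsd _
    have havx : avec S U x = indv x - vvec S U x := by
      rw [vvec]; funext p; simp
    have hkey : avec S U x ⬝ᵥ S *ᵥ avec S U x = (S *ᵥ avec S U x) x := by
      calc avec S U x ⬝ᵥ S *ᵥ avec S U x
          = avec S U x ⬝ᵥ (S *ᵥ indv x - S *ᵥ vvec S U x) := by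
            rw [← Matrix.mulVec_sub, ← havx]
        _ = avec S U x ⬝ᵥ (S *ᵥ indv x) - avec S U x ⬝ᵥ (S *ᵥ vvec S U x) := by
            rw [dotProduct_sub]
        _ = avec S U x ⬝ᵥ (S *ᵥ indv x) := by
            rw [dot_supp_vanish U _ _ (avec_supp S U x) (hwU x), sub_zero]
        _ = indv x ⬝ᵥ (S *ᵥ avec S U x) := hswap _ _
        _ = (S *ᵥ avec S U x) x := dot_indv _ _
    have hx1 : Vx = S x x - (S *ᵥ avec S U x) x := by
      rw [hVxdef, vvec, Matrix.mulVec_sub, Pi.sub_apply, mulVec_indv]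
    rw [hx1, ← hkey]
    have hsx := hstd x
    linarith
  -- Var(z | U) ≥ J
  have hVzJ : J ≤ Vz := by
    set u0 : Fin m → ℝ := S⁻¹ *ᵥ indv z with hu0def
    have hSu0 : S *ᵥ u0 = indv z := by
      rw [hu0def, Matrix.mulVec_mulVec, hSinv, Matrix.one_mulVec]
    have hu0q : u0 ⬝ᵥ S *ᵥ u0 = S⁻¹ z z := by
      rw [hSu0, dotProduct_comm, dot_indv, hu0def, mulVec_indv]
    have hu0ne : u0 ≠ 0 := by
      intro h
      have h2 : S *ᵥ u0 = 0 := by rw [h, Matrix.mulVec_zero]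
      rw [hSu0] at h2
      have h3 := congrFun h2 z
      simp [indv] at h3
    have hizz : 0 < S⁻¹ z z := hu0q ▸ hpos u0 hu0ne
    have hcross : u0 ⬝ᵥ S *ᵥ vvec S U z = 1 := by
      rw [hswap, hSu0, dotProduct_comm, dot_indv, vvec, Pi.sub_apply,
        avec_supp S U z z hzU]
      simp [indv]
    have hcs := quad_cs S hswap hpsd u0 (vvec S U z)
    rw [hcross, hu0q, ← hVzq] at hcs
    have h1 : 1 ≤ S⁻¹ z z * Vz := by nlinarith
    have h2 : (S⁻¹ z z)⁻¹ ≤ Vz := by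
      rw [inv_eq_one_div, div_le_iff₀ hizz]
      nlinarith
    have h3 := hNVV z
    linarith
  -- the structural equation: row z of B is supported on U ∪ {x}
  set bvec : Fin m → ℝ := fun p => B z p with hbvecdef
  have hbzz : B z z = 0 := hB z z le_rfl
  have hbsupp : ∀ p, p ∉ U → p ≠ x → bvec p = 0 := by
    intro p hpU hpx
    by_contra h0
    have hedge : SEM.Edge B p z := h0
    have hz : z ∈ U ∪ {x, z} := by simp
    have := hanc z hz p hedge
    rcases Finset.mem_union.mp this with h | h
    · exact hpU h
    · rcases Finset.mem_insert.mp h with h | h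
      · exact hpx h
      · rw [Finset.mem_singleton] at h
        subst h
        exact h0 hbzz
  -- S *ᵥ (indv z - bvec) vanishes on non-descendants of z
  have hg0 : ∀ q : Fin m, (S *ᵥ (indv z - bvec)) q = A q z * d z := by
    have hfac : S * (1 - B)ᵀ = A * Matrix.diagonal d := by
      have htdet : IsUnit (1 - B)ᵀ.det := by rwa [Matrix.det_transpose]
      have ht : ((1 - B)ᵀ)⁻¹ * (1 - B)ᵀ = 1 := Matrix.nonsing_inv_mul _ htdet
      calc S * (1 - B)ᵀ = A * Matrix.diagonal d * (((1 - B)ᵀ)⁻¹ * (1 - B)ᵀ) := by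
            rw [hSdef, SEM.cov, ← hAdef]
            simp only [Matrix.mul_assoc]
        _ = A * Matrix.diagonal d := by rw [ht, Matrix.mul_one]
    intro q
    have h1 : (S *ᵥ (indv z - bvec)) q = (S * (1 - B)ᵀ : Matrix (Fin m) (Fin m) ℝ) q z := by
      rw [Matrix.mul_apply]
      show (fun p => S q p) ⬝ᵥ (indv z - bvec) = _
      apply Finset.sum_congr rfl
      intro p _
      simp only [Pi.sub_apply, Matrix.transpose_apply, Matrix.sub_apply,
        Matrix.one_apply, indv]
      have : (if p = z then (1:ℝ) else 0) = (if z = p then (1:ℝ) else 0) := by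
        by_cases h : p = z
        · subst h; simp
        · rw [if_neg h, if_neg (fun hh => h hh.symm)]
      rw [this]
    rw [h1, hfac, Matrix.mul_diagonal]
  have hdescx : ¬ SEM.Desc B z x := by
    intro h
    exact absurd (desc_le hB h) (not_le.mpr hxz)
  have hg0U : ∀ p ∈ U, (S *ᵥ (indv z - bvec)) p = 0 := by
    intro p hp
    have hz0 := inv_one_sub_apply_eq_zero hB (hnodesc p hp)
    rw [← hAdef] at hz0
    rw [hg0, hz0, zero_mul]
  have hg0x : (S *ᵥ (indv z - bvec)) x = 0 := by
    have hz0 := inv_one_sub_apply_eq_zero hB hdescx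
    rw [← hAdef] at hz0
    rw [hg0, hz0, zero_mul]
  -- decompose bvec = cvec + e • indv x
  set e : ℝ := B z x with hedef
  set cvec : Fin m → ℝ := fun p => if p = x then 0 else bvec p with hcvecdef
  have hcsupp : ∀ p, p ∉ U → cvec p = 0 := by
    intro p hp
    by_cases hpx : p = x
    · rw [hcvecdef]; simp [hpx]
    · rw [hcvecdef]; simp only [if_neg hpx]; exact hbsupp p hp hpx
  have hbc : ∀ p, bvec p = cvec p + e * indv x p := by
    intro p
    by_cases hpx : p = x
    · subst hpx; simp [hcvecdef, indv, hedef, hbvecdef]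
    · simp [hcvecdef, indv, if_neg hpx]
  -- the key identity: Cov(x, z | U) = e * Var(x | U)
  have hCxzVx : Cxz = e * Vx := by
    have hsplit : vvec S U z = (indv z - bvec) + ((cvec - avec S U z) + e • indv x) := by
      funext p
      simp only [vvec, Pi.sub_apply, Pi.add_apply, Pi.smul_apply, smul_eq_mul]
      have := hbc p
      linarith [this]
    have h1 : Cxz = vvec S U x ⬝ᵥ (S *ᵥ vvec S U z) :=
      (dot_vvec S U x _ (hwU z)).symm
    have h2 : vvec S U x ⬝ᵥ (S *ᵥ (indv z - bvec)) = 0 := by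
      rw [dot_vvec S U x _ hg0U, hg0x]
    have h3 : vvec S U x ⬝ᵥ (S *ᵥ (cvec - avec S U z)) = 0 := by
      rw [hswap]
      apply dot_supp_vanish U _ _ _ (hwU x)
      intro p hp
      simp only [Pi.sub_apply]
      rw [hcsupp p hp, avec_supp S U z p hp, sub_zero]
    have h4 : vvec S U x ⬝ᵥ (S *ᵥ indv x) = Vx := by
      have hix : indv x = vvec S U x + avec S U x := by
        funext p; simp [vvec]
      rw [hix, Matrix.mulVec_add, dotProduct_add]
      have h5 : vvec S U x ⬝ᵥ (S *ᵥ avec S U x) = 0 := by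
        rw [hswap]
        exact dot_supp_vanish U _ _ (avec_supp S U x) (hwU x)
      rw [h5, add_zero, hVxq]
    rw [h1, hsplit, Matrix.mulVec_add, Matrix.mulVec_add, Matrix.mulVec_smul,
      dotProduct_add, dotProduct_add, dotProduct_smul, h2, h3, smul_eq_mul, h4]
    ring
  -- final bound
  have hparcorr : SEM.parcorr S x z U = Cxz / Real.sqrt (Vx * Vz) := by
    rw [SEM.parcorr, hcond 0 1, hcond 0 0, hcond 1 1]
    simp [hVxdef, hVzdef, hCxzdef]
  rw [hparcorr, hCxzVx]
  have hsJ : 0 < Real.sqrt J := Real.sqrt_pos.mpr hJ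
  by_cases hVx : Vx = 0
  · rw [hVx, mul_zero, zero_div, abs_zero]
    positivity
  · have hVxpos : 0 < Vx := lt_of_le_of_ne hVx0 (Ne.symm hVx)
    have hVzpos : 0 < Vz := lt_of_lt_of_le hJ hVzJ
    have hsx : 0 < Real.sqrt Vx := Real.sqrt_pos.mpr hVxpos
    have hsz : 0 < Real.sqrt Vz := Real.sqrt_pos.mpr hVzpos
    have hsqrtmul : Real.sqrt (Vx * Vz) = Real.sqrt Vx * Real.sqrt Vz :=
      Real.sqrt_mul hVx0 Vz
    have habs : |e * Vx / Real.sqrt (Vx * Vz)|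
        = |e| * Vx / (Real.sqrt Vx * Real.sqrt Vz) := by
      rw [hsqrtmul, abs_div, abs_mul, abs_of_nonneg hVx0,
        abs_of_nonneg (mul_nonneg hsx.le hsz.le)]
    rw [habs]
    have hVxsq : Vx = Real.sqrt Vx * Real.sqrt Vx := (Real.mul_self_sqrt hVx0).symm
    have hrw : |e| * Vx / (Real.sqrt Vx * Real.sqrt Vz)
        = |e| * Real.sqrt Vx / Real.sqrt Vz := by
      rw [hVxsq]
      field_simp
      linear_combination
        (-(|e| * (Real.sqrt (Real.sqrt Vx ^ 2) + Real.sqrt Vx))) * Real.sqrt_sq hsx.le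
    rw [hrw]
    have hnum : |e| * Real.sqrt Vx ≤ |e| := by
      have h1 : Real.sqrt Vx ≤ 1 := by
        rw [show (1:ℝ) = Real.sqrt 1 from (Real.sqrt_one).symm]
        exact Real.sqrt_le_sqrt hVx1
      nlinarith [abs_nonneg e]
    have hden : Real.sqrt J ≤ Real.sqrt Vz := Real.sqrt_le_sqrt hVzJ
    exact div_le_div₀ (abs_nonneg e) hnum hsJ hden

end SEMAux

open SEM Matrix

/-- Under k-Triangle-Faithfulness (k > 0) and NVV(J): if `(x, y, z)` is a
shielded collider (a triangle with `x → y ← z`, and, wlog, `z` not an ancestor of `x`,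
i.e. `x < z` in the causal order) and `W` is a conditioning set containing `y` with
`|ρ(x, z | W)| < δ`, then for any ancestral conditioning set `U` containing neither `y`
nor any descendant of `z`, `|ρ(x, z | U) − ρ(x, z | W)| < δ(1 + J^{−1/2}/k)`. -/
theorem shielded_collider_parcorr_diff_small {m : ℕ}
    (B : Matrix (Fin m) (Fin m) ℝ) (d : Fin m → ℝ)
    (hB : SEM.StrictLower B) (hd : ∀ p, 0 < d p)
    (J k δ : ℝ) (hJ : 0 < J) (hk : 0 < k)
    (hstd : ∀ p, SEM.cov B (Matrix.diagonal d) p p = 1)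
    (hNVV : ∀ p, J ≤ (((SEM.cov B (Matrix.diagonal d))⁻¹) p p)⁻¹)
    -- the k-Triangle-Faithfulness assumption
    (hkTF : ∀ x y z : Fin m,
      (SEM.Edge B x y ∨ SEM.Edge B y x) → (SEM.Edge B y z ∨ SEM.Edge B z y) →
      (SEM.Edge B x z ∨ SEM.Edge B z x) →
      ((¬ (SEM.Edge B x y ∧ SEM.Edge B z y)) →
        ∀ W : Finset (Fin m), x ∉ W → z ∉ W → y ∉ W →
          |SEM.parcorr (SEM.cov B (Matrix.diagonal d)) x z W| ≥ k * |SEM.eCoef B x z|) ∧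
      ((SEM.Edge B x y ∧ SEM.Edge B z y) →
        ∀ W : Finset (Fin m), x ∉ W → z ∉ W → y ∈ W →
          |SEM.parcorr (SEM.cov B (Matrix.diagonal d)) x z W| ≥ k * |SEM.eCoef B x z|))
    -- a shielded collider `x → y ← z`
    (x y z : Fin m) (hxz : x < z)
    (hcol : SEM.Edge B x y ∧ SEM.Edge B z y)
    (hshield : SEM.Edge B x z ∨ SEM.Edge B z x)
    -- the conditioning set `W`, containing `y`, with a small partial correlation
    (W : Finset (Fin m)) (hxW : x ∉ W) (hzW : z ∉ W) (hyW : y ∈ W)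
    (hsmall : |SEM.parcorr (SEM.cov B (Matrix.diagonal d)) x z W| < δ)
    -- the ancestral conditioning set `U`
    (U : Finset (Fin m)) (hxU : x ∉ U) (hzU : z ∉ U) (hyU : y ∉ U)
    (hanc : SEM.Ancestral B (U ∪ {x, z}))
    (hnodesc : ∀ p ∈ U, ¬ SEM.Desc B z p) :
    |SEM.parcorr (SEM.cov B (Matrix.diagonal d)) x z U -
        SEM.parcorr (SEM.cov B (Matrix.diagonal d)) x z W| <
      δ * (1 + (Real.sqrt J)⁻¹ / k) := by
  classical
  have hbxz : B x z = 0 := hB x z hxz.le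
  have hcoef : SEM.eCoef B x z = B z x := by
    rw [SEM.eCoef]
    by_cases h : B z x ≠ 0
    · rw [if_pos h]
    · rw [if_neg h]; push_neg at h; rw [h, hbxz]
  have hTF := (hkTF x y z (Or.inl hcol.1) (Or.inr hcol.2) hshield).2 hcol W hxW hzW hyW
  rw [hcoef] at hTF
  have hbound := SEMAux.parcorr_anc_bound B d hB hd J hJ hstd hNVV x z hxz U hxU hzU
    hanc hnodesc
  set ρU := SEM.parcorr (SEM.cov B (Matrix.diagonal d)) x z U with hρU
  set ρW := SEM.parcorr (SEM.cov B (Matrix.diagonal d)) x z W with hρW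
  have hδ : 0 < δ := lt_of_le_of_lt (abs_nonneg _) hsmall
  have hs : 0 < Real.sqrt J := Real.sqrt_pos.mpr hJ
  have hks : 0 < k * Real.sqrt J := mul_pos hk hs
  have htri : |ρU - ρW| ≤ |ρU| + |ρW| := abs_sub _ _
  have hkey : |ρU| * (k * Real.sqrt J) ≤ |ρW| := by
    have h1 : |ρU| * Real.sqrt J ≤ |B z x| := (le_div_iff₀ hs).mp hbound
    have h2 : k * (|ρU| * Real.sqrt J) ≤ k * |B z x| :=
      mul_le_mul_of_nonneg_left h1 hk.le
    have h3 : k * |B z x| ≤ |ρW| := hTF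
    nlinarith
  have h3 : |ρU| ≤ |ρW| / (k * Real.sqrt J) := (le_div_iff₀ hks).mpr hkey
  have h4 : |ρW| / (k * Real.sqrt J) < δ / (k * Real.sqrt J) :=
    (div_lt_div_iff_of_pos_right hks).mpr hsmall
  have heq : δ * (1 + (Real.sqrt J)⁻¹ / k) = δ + δ / (k * Real.sqrt J) := by
    field_simp
  rw [heq]
  linarith
end

section
/- If the true causal DAG G satisfies the Causal Markov and Triangle-Faithfulness assumptions with respect to a perfect oracle, and (X, Y, Z) is a triple with X adjacent to Y and Y adjacent to Z (in G), such that X and Z are independent given some set containing Y and also independent given some set not containing Y, then X and Z are not adjacent in G. -/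
/-- The Triangle-Faithfulness assumption (pairwise oracle form). -/
def TriangleFaithful {V : Type*} (G : DAG V) (CI : V → V → Set V → Prop) : Prop :=
  ∀ x y z : V, G.Adj x y → G.Adj y z → G.Adj x z →
    ((¬ (G.Edge x y ∧ G.Edge z y) →
        ∀ S : Set V, x ∉ S → z ∉ S → y ∉ S → ¬ CI x z S) ∧
     ((G.Edge x y ∧ G.Edge z y) →
        ∀ S : Set V, x ∉ S → z ∉ S → y ∈ S → ¬ CI x z S))

/-- If the true causal DAG `G` satisfies the Causal Markov and
Triangle-Faithfulness assumptions with respect to a perfect oracle, and `(x, y, z)` is a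
triple with `x` adjacent to `y` and `y` adjacent to `z`, such that `x` and `z` are
independent given some set containing `y` and also independent given some set not
containing `y`, then `x` and `z` are not adjacent in `G`. -/
theorem definite_nonadjacency_sound
    {V : Type*} [Fintype V] [DecidableEq V] (G : DAG V)
    (CI : V → V → Set V → Prop)
    (hMarkov : ∀ (x y : V) (Z : Set V), G.DSep x y Z → CI x y Z)
    (hTF : TriangleFaithful G CI)
    (x y z : V) (hxy : G.Adj x y) (hyz : G.Adj y z)
    (h1 : ∃ S : Set V, x ∉ S ∧ z ∉ S ∧ y ∈ S ∧ CI x z S)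
    (h2 : ∃ S : Set V, x ∉ S ∧ z ∉ S ∧ y ∉ S ∧ CI x z S) :
    ¬ G.Adj x z := by
  intro hxz
  obtain ⟨h1a, h1b⟩ := hTF x y z hxy hyz hxz
  by_cases hc : G.Edge x y ∧ G.Edge z y
  · obtain ⟨S, hS1, hS2, hS3, hS4⟩ := h1
    exact h1b hc S hS1 hS2 hS3 hS4
  · obtain ⟨S, hS1, hS2, hS3, hS4⟩ := h2
    exact h1a hc S hS1 hS2 hS3 hS4
end
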